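/- arXiv:math/0603608 — 13 statements merged into one kernel-verified Lean document; each statement's English description precedes it below -/
import Mathlib

section
/- If u is a uniformly recurrent infinite word over a finite alphabet whose language contains infinitely many palindromes, then the language of u is closed under reversal (i.e., for every factor w of u, the reversal of w is also a factor of u). -/
/-- `w` is a (finite) factor of the infinite word `u`. -/
def IsFactor {A : Type*} (u : ℕ → A) (w : List A) : Prop :=
  ∃ i, w = (List.range w.length).map fun j => u (i + j)

lemma isFactor_of_infix {A : Type*} (u : ℕ → A) {w z : List A}
    (hw : IsFactor u w) (hz : z <:+: w) : IsFactor u z := by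
  obtain ⟨i, hw⟩ := hw
  obtain ⟨s, t, hst⟩ := hz
  refine ⟨i + s.length, ?_⟩
  apply List.ext_getElem (by simp)
  intro k hk hk'
  have hkl : s.length + k < w.length := by
    subst hst; simp; omega
  have h1 : w[s.length + k] = u (i + (s.length + k)) := by
    simp [List.getElem_of_eq hw hkl]
  have h2 : w[s.length + k]'hkl = z[k] := by
    subst hst
    simp [List.getElem_append, hk]
  simp only [List.getElem_map, List.getElem_range]
  rw [← h2, h1]; ring_nf

/-- If `u` is a uniformly recurrent infinite word over a finite alphabet whose
language contains infinitely many palindromes, then the language of `u` is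
closed under reversal. -/
theorem stmt0 {A : Type*} [Fintype A] (u : ℕ → A)
    (hur : ∀ n : ℕ, ∃ R : ℕ, ∀ w : List A, IsFactor u w → w.length = R →
      ∀ z : List A, IsFactor u z → z.length = n → z <:+: w)
    (hpal : {p : List A | IsFactor u p ∧ p.reverse = p}.Infinite) :
    ∀ w : List A, IsFactor u w → IsFactor u w.reverse := by
  intro w hw
  obtain ⟨R, hR⟩ := hur w.length
  -- find a palindrome of length ≥ R
  have : ∃ p : List A, (IsFactor u p ∧ p.reverse = p) ∧ R ≤ p.length := by
    by_contra h
    push_neg at h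
    apply hpal
    apply Set.Finite.subset (List.finite_length_lt A R)
    intro p hp
    exact h p hp
  obtain ⟨p, ⟨hpf, hpp⟩, hpl⟩ := this
  -- take prefix of p of length R: it's a factor of length R
  set q := p.take R with hq
  have hqf : IsFactor u q := isFactor_of_infix u hpf (List.take_prefix R p).isInfix
  have hql : q.length = R := by simp [hq, hpl]
  have hwq : w <:+: q := hR q hqf hql w hw rfl
  have hwp : w <:+: p := hwq.trans (List.take_prefix R p).isInfix
  have : w.reverse <:+: p := by
    rw [← hpp]
    exact hwp.reverse
  exact isFactor_of_infix u hpf this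
end

section
/- Every finite word w contains at most |w|+1 distinct palindromic factors (counting the empty word as a palindrome). -/
private lemma suffix_take_of_infix {A : Type*} {p w : List A} (h : p <:+: w) :
    ∃ i ≤ w.length, p <:+ w.take i := by
  obtain ⟨s, t, rfl⟩ := h
  refine ⟨s.length + p.length, by simp, ?_⟩
  have h1 : (s ++ p ++ t).take (s.length + p.length) = s ++ p := by
    rw [List.append_assoc, List.take_length_add_append, List.take_left]
  rw [h1]
  exact ⟨s, rfl⟩

private lemma key {A : Type*} {p q u : List A} (hp : p.reverse = p) (hq : q.reverse = q)
    (hps : p <:+ u) (hqs : q <:+ u) (hlen : p.length < q.length) :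
    ∃ j < u.length, p <:+ u.take j := by
  -- p is a suffix of q
  have hsq : p <:+ q := by
    rw [← List.reverse_prefix]
    exact List.prefix_of_prefix_length_le (List.reverse_prefix.mpr hps)
      (List.reverse_prefix.mpr hqs) (by simpa using hlen.le)
  -- hence p is a prefix of q, since both are palindromes
  have hpq : p <+: q := by
    have := List.reverse_prefix.mpr hsq
    rwa [hp, hq] at this
  obtain ⟨r, hr⟩ := hpq
  obtain ⟨s, hs⟩ := hqs
  have hrne : r ≠ [] := by
    intro h
    rw [h, List.append_nil] at hr
    have := congrArg List.length hr
    omega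
  refine ⟨s.length + p.length, ?_, ?_⟩
  · have : u.length = s.length + (p.length + r.length) := by
      rw [← hs, ← hr]; simp
    have : 0 < r.length := List.length_pos_iff.mpr hrne
    omega
  · have hu : u = s ++ p ++ r := by rw [← hs, ← hr, List.append_assoc]
    have h1 : u.take (s.length + p.length) = s ++ p := by
      rw [hu, List.append_assoc, List.take_length_add_append, List.take_left]
    rw [h1]
    exact ⟨s, rfl⟩

/-- Every finite word `w` contains at most `|w| + 1` distinct palindromic
factors (the empty word counts as a palindromic factor). -/
theorem stmt1 {A : Type*} (w : List A) :
    {p : List A | p <:+: w ∧ p.reverse = p}.ncard ≤ w.length + 1 := by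
  classical
  set S := {p : List A | p <:+: w ∧ p.reverse = p} with hS
  set f : List A → ℕ := fun p => sInf {i | p <:+ w.take i} with hf
  have hne : ∀ p ∈ S, {i | p <:+ w.take i}.Nonempty := by
    intro p hp
    obtain ⟨i, _, hi⟩ := suffix_take_of_infix hp.1
    exact ⟨i, hi⟩
  have hmem : ∀ p ∈ S, p <:+ w.take (f p) := fun p hp => Nat.sInf_mem (hne p hp)
  have hmaps : ∀ p ∈ S, f p ∈ (↑(Finset.Iic w.length) : Set ℕ) := by
    intro p hp
    obtain ⟨i, hi, hsi⟩ := suffix_take_of_infix hp.1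
    simp only [Finset.coe_Iic, Set.mem_Iic]
    exact le_trans (Nat.sInf_le hsi) hi
  have hinj : Set.InjOn f S := by
    intro p hpS q hqS heq
    have hp := hmem p hpS
    have hq := hmem q hqS
    rw [heq] at hp
    rcases lt_trichotomy p.length q.length with hlt | heql | hgt
    · obtain ⟨j, hj, hsj⟩ := key hpS.2 hqS.2 hp hq hlt
      have hjlt : j < f q := lt_of_lt_of_le hj (by simp [List.length_take])
      rw [List.take_take, min_eq_left hjlt.le] at hsj
      have hmemj : j ∈ {i | p <:+ w.take i} := hsj
      have hle : f p ≤ j := Nat.sInf_le hmemj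
      omega
    · -- equal lengths, both suffixes of the same list
      have : p <:+ q := by
        rw [← List.reverse_prefix]
        exact List.prefix_of_prefix_length_le (List.reverse_prefix.mpr hp)
          (List.reverse_prefix.mpr hq) (by simpa using heql.le)
      exact this.eq_of_length heql
    · obtain ⟨j, hj, hsj⟩ := key hqS.2 hpS.2 hq hp hgt
      have hjlt : j < f q := lt_of_lt_of_le hj (by simp [List.length_take])
      rw [List.take_take, min_eq_left hjlt.le] at hsj
      have hmemj : j ∈ {i | q <:+ w.take i} := hsj
      have hle : f q ≤ j := Nat.sInf_le hmemj
      omega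
  have hfin : (↑(Finset.Iic w.length) : Set ℕ).Finite := (Finset.Iic w.length).finite_toSet
  have := Set.ncard_le_ncard_of_injOn f hmaps hinj hfin
  rwa [Set.ncard_coe_finset, Nat.card_Iic] at this
end

section
/- A finite word w satisfies P(w) = |w|+1 if and only if every prefix v of w has a palindromic suffix that occurs exactly once in v. -/
namespace DJPaux

variable {A : Type*}

/-- The set of palindromic factors of `v` (including the empty word). -/
def Pal (v : List A) : Set (List A) := {p | p <:+: v ∧ p.reverse = p}

lemma pal_finite (v : List A) : (Pal v).Finite :=
  (v.sublists.finite_toSet).subset fun p hp => List.mem_sublists.2 hp.1.sublist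

lemma pal_mono {v w : List A} (h : v <:+: w) : Pal v ⊆ Pal w :=
  fun p hp => ⟨hp.1.trans h, hp.2⟩

/-- An infix has an occurrence. -/
lemma occ_of_infix {p v : List A} (h : p <:+: v) :
    ∃ i, i + p.length ≤ v.length ∧ (v.drop i).take p.length = p := by
  obtain ⟨s, t, rfl⟩ := h
  refine ⟨s.length, by simp, ?_⟩
  rw [List.append_assoc, List.drop_left, List.take_left]

/-- An occurrence gives an infix. -/
lemma infix_of_occ {p v : List A} {i : ℕ} (h : (v.drop i).take p.length = p) :
    p <:+: v :=
  h ▸ (List.take_prefix _ _).isInfix.trans (List.drop_suffix i v).isInfix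

/-- An occurrence ending within the first `n` letters gives an infix of `v.take n`. -/
lemma infix_take_of_occ {p v : List A} {i n : ℕ} (hn : i + p.length ≤ n)
    (h : (v.drop i).take p.length = p) : p <:+: v.take n := by
  refine infix_of_occ (i := i) ?_
  rw [List.drop_take, List.take_take, min_eq_left (by omega), h]

/-- A suffix occurs at position `|v| - |p|`. -/
lemma occ_of_suffix {p v : List A} (h : p <:+ v) :
    (v.length - p.length) + p.length ≤ v.length ∧
      (v.drop (v.length - p.length)).take p.length = p := by
  obtain ⟨s, rfl⟩ := h
  constructor
  · simp
  · rw [List.length_append, Nat.add_sub_cancel, List.drop_left, List.take_length]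

/-- An occurrence reaching the end of the word is a suffix occurrence. -/
lemma suffix_of_occ_end {p v : List A} {i : ℕ} (hlen : i + p.length = v.length)
    (h : (v.drop i).take p.length = p) : p <:+ v := by
  have hd : (v.drop i).take p.length = v.drop i :=
    List.take_of_length_le (by rw [List.length_drop]; omega)
  rw [hd] at h
  exact h ▸ List.drop_suffix i v

/-- If `p` is not a factor of `u`, any occurrence of `p` in `u ++ [a]` ends at the very end. -/
lemma occ_end_of_not_infix {u : List A} {a : A} {p : List A}
    (hp : ¬ p <:+: u) {i : ℕ} (hi : i + p.length ≤ (u ++ [a]).length)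
    (h : ((u ++ [a]).drop i).take p.length = p) : i + p.length = (u ++ [a]).length := by
  by_contra hne
  have hle : i + p.length ≤ u.length := by
    simp only [List.length_append, List.length_singleton] at hi hne ⊢; omega
  have h1 : p <:+: (u ++ [a]).take (i + p.length) := infix_take_of_occ le_rfl h
  rw [List.take_append_of_le_length hle] at h1
  exact hp (h1.trans (List.take_prefix _ _).isInfix)

/-- A new palindromic factor of `u ++ [a]` is a suffix of `u ++ [a]`. -/
lemma new_suffix {u : List A} {a : A} {p : List A}
    (hmem : p ∈ Pal (u ++ [a])) (hnew : ¬ p <:+: u) : p <:+ (u ++ [a]) := by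
  obtain ⟨i, hi, hocc⟩ := occ_of_infix hmem.1
  exact suffix_of_occ_end (occ_end_of_not_infix hnew hi hocc) hocc

/-- At most one new palindrome appears when appending a letter. -/
lemma new_subsingleton (u : List A) (a : A) :
    (Pal (u ++ [a]) \ Pal u).Subsingleton := by
  have key : ∀ p q : List A, p ∈ Pal (u ++ [a]) \ Pal u → q ∈ Pal (u ++ [a]) \ Pal u →
      p.length ≤ q.length → p = q := by
    intro p q hp hq hlen
    have hpnew : ¬ p <:+: u := fun h => hp.2 ⟨h, hp.1.2⟩
    have hqnew : ¬ q <:+: u := fun h => hq.2 ⟨h, hq.1.2⟩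
    have hps : p <:+ (u ++ [a]) := new_suffix hp.1 hpnew
    have hqs : q <:+ (u ++ [a]) := new_suffix hq.1 hqnew
    have hpq : p <:+ q := List.suffix_of_suffix_length_le hps hqs hlen
    rcases Nat.lt_or_ge p.length q.length with hlt | hge
    · -- p is also a prefix of q (both palindromes), so p occurs earlier — contradiction
      exfalso
      have hpref : p <+: q := by
        rw [← List.reverse_suffix, hp.1.2, hq.1.2]; exact hpq
      obtain ⟨s, heq⟩ := hqs
      -- occurrence of p in u ++ [a] at position s.length
      have hocc : ((s ++ q).drop s.length).take p.length = p := by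
        rw [List.drop_left]
        obtain ⟨t, rfl⟩ := hpref
        rw [List.take_left]
      have hu : (s ++ q).length = u.length + 1 := by rw [heq]; simp
      have hlenq : s.length + q.length = (s ++ q).length := by simp
      have h1 : p <:+: (s ++ q).take (s.length + p.length) :=
        infix_take_of_occ le_rfl hocc
      have h2 : (s ++ q).take (s.length + p.length) = u.take (s.length + p.length) := by
        rw [heq, List.take_append_of_le_length (by omega)]
      rw [h2] at h1
      exact hpnew (h1.trans (List.take_prefix _ _).isInfix)
    · exact hpq.sublist.eq_of_length (le_antisymm hlen hge)
  intro p hp q hq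
  rcases Nat.le_total p.length q.length with h | h
  · exact key p q hp hq h
  · exact (key q p hq hp h).symm

lemma pal_nil : Pal ([] : List A) = {([] : List A)} := by
  ext p
  simp [Pal, List.infix_nil]
  rintro rfl; rfl

lemma ncard_pal_nil : (Pal ([] : List A)).ncard = 1 := by
  rw [pal_nil]; exact Set.ncard_singleton _

/-- Appending a letter increases the palindrome count by at most one. -/
lemma step_le (u : List A) (a : A) : (Pal (u ++ [a])).ncard ≤ (Pal u).ncard + 1 := by
  have hsub : Pal u ⊆ Pal (u ++ [a]) := pal_mono (List.prefix_append u [a]).isInfix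
  have hsplit : Pal (u ++ [a]) = Pal u ∪ (Pal (u ++ [a]) \ Pal u) :=
    (Set.union_diff_cancel hsub).symm
  have hN : (Pal (u ++ [a]) \ Pal u).ncard ≤ 1 := by
    rcases (new_subsingleton u a).eq_empty_or_singleton with h | ⟨x, h⟩
    · rw [h]; simp
    · rw [h]; simp
  calc (Pal (u ++ [a])).ncard = (Pal u ∪ (Pal (u ++ [a]) \ Pal u)).ncard := by rw [← hsplit]
    _ ≤ (Pal u).ncard + (Pal (u ++ [a]) \ Pal u).ncard := Set.ncard_union_le _ _
    _ ≤ (Pal u).ncard + 1 := by omega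

lemma F_le (v : List A) : (Pal v).ncard ≤ v.length + 1 := by
  induction v using List.reverseRecOn with
  | nil => simp [ncard_pal_nil]
  | append_singleton u a ih =>
      calc (Pal (u ++ [a])).ncard ≤ (Pal u).ncard + 1 := step_le u a
        _ ≤ u.length + 1 + 1 := by omega
        _ = (u ++ [a]).length + 1 := by simp

lemma take_succ_eq {w : List A} {n : ℕ} (hn : n < w.length) :
    w.take (n + 1) = w.take n ++ [w[n]] := by
  rw [List.take_succ, List.getElem?_eq_getElem hn]
  rfl

end DJPaux

open DJPaux in
/-- A finite word `w` contains exactly `|w| + 1` distinct palindromic factors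
(counting the empty word) if and only if every prefix `v` of `w` has a
palindromic suffix occurring exactly once in `v` (Droubay–Justin–Pirillo). -/
theorem stmt2 {A : Type*} (w : List A) :
    {p : List A | p <:+: w ∧ p.reverse = p}.ncard = w.length + 1 ↔
      ∀ v : List A, v <+: w → ∃ p : List A, p <:+ v ∧ p.reverse = p ∧
        (∃! i : ℕ, i + p.length ≤ v.length ∧ (v.drop i).take p.length = p) := by
  constructor
  · -- forward direction
    intro hF v hv
    have hvt : v = w.take v.length := List.prefix_iff_eq_take.1 hv
    have hvlen : v.length ≤ w.length := hv.length_le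
    -- the palindrome counts along prefixes are exactly n + 1
    have chain : ∀ k, (w.length - k) + 1 ≤ (Pal (w.take (w.length - k))).ncard := by
      intro k
      induction k with
      | zero =>
          simp only [Nat.sub_zero, List.take_length]
          exact hF.symm.le
      | succ k ih =>
          rcases le_or_gt w.length k with h | h
          · have : w.length - (k + 1) = 0 := by omega
            rw [this]
            simp only [List.take_zero, ncard_pal_nil, le_refl]
          · set n := w.length - (k + 1) with hn
            have hnlt : n < w.length := by omega
            have hstep : (Pal (w.take (n + 1))).ncard ≤ (Pal (w.take n)).ncard + 1 := by
              rw [take_succ_eq hnlt]; exact step_le _ _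
            have hn1 : n + 1 = w.length - k := by omega
            rw [hn1] at hstep
            omega
    have hexact : ∀ n, n ≤ w.length → (Pal (w.take n)).ncard = n + 1 := by
      intro n hn
      have h1 := chain (w.length - n)
      have h2 : w.length - (w.length - n) = n := by omega
      rw [h2] at h1
      have h3 := F_le (w.take n)
      rw [List.length_take, min_eq_left hn] at h3
      omega
    -- now build the unioccurrent palindromic suffix of v
    rcases Nat.eq_zero_or_pos v.length with h0 | hpos
    · have hvnil : v = [] := List.length_eq_zero_iff.1 h0
      subst hvnil
      refine ⟨[], List.nil_suffix, rfl, 0, ⟨by simp, by simp⟩, ?_⟩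
      rintro i ⟨hi, -⟩
      simpa using hi
    · obtain ⟨m, hm⟩ : ∃ m, v.length = m + 1 := ⟨v.length - 1, by omega⟩
      have hmlt : m < w.length := by omega
      set u := w.take m with hu
      set a := w[m] with ha
      have hv' : v = u ++ [a] := by rw [hvt, hm, take_succ_eq hmlt]
      have hFu : (Pal u).ncard = m + 1 := hexact m (by omega)
      have hFv : (Pal v).ncard = m + 2 := by
        rw [hvt, hm]; exact hexact (m + 1) (by omega)
      -- there is a new palindrome
      have hnewex : ∃ p, p ∈ Pal v ∧ p ∉ Pal u := by
        by_contra hcon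
        push_neg at hcon
        have hsub : Pal v ⊆ Pal u := fun p hp => hcon p hp
        have := Set.ncard_le_ncard hsub (pal_finite u)
        omega
      obtain ⟨p, hpv, hpu⟩ := hnewex
      have hpnew : ¬ p <:+: u := fun h => hpu ⟨h, hpv.2⟩
      have hps : p <:+ v := hv' ▸ new_suffix (hv' ▸ hpv) hpnew
      have hplen : p.length ≤ v.length := hps.length_le
      refine ⟨p, hps, hpv.2, v.length - p.length, occ_of_suffix hps, ?_⟩
      rintro i ⟨hi, hocc⟩
      have : i + p.length = v.length := by
        rw [hv'] at hi hocc ⊢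
        exact occ_end_of_not_infix hpnew hi hocc
      omega
  · -- backward direction
    intro h
    have hle : (Pal w).ncard ≤ w.length + 1 := F_le w
    have hge : ∀ n, n ≤ w.length → n + 1 ≤ (Pal (w.take n)).ncard := by
      intro n hn
      induction n with
      | zero => simp [ncard_pal_nil]
      | succ m ih =>
          have hmle : m ≤ w.length := by omega
          set v := w.take (m + 1) with hvdef
          have hvlen : v.length = m + 1 := by
            rw [hvdef, List.length_take]; omega
          obtain ⟨p, hps, hpal, i₀, ⟨hi₀le, hi₀occ⟩, huniq⟩ := h v (List.take_prefix _ _)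
          -- p is nonempty
          have hpne : p ≠ [] := by
            rintro rfl
            have := (huniq 0 (by simp)).trans (huniq 1 (by simp [hvlen])).symm
            omega
          have hplen : p.length ≤ v.length := hps.length_le
          have hppos : 0 < p.length := List.length_pos_iff.2 hpne
          -- the suffix occurrence
          obtain ⟨hsle, hsocc⟩ := occ_of_suffix hps
          -- p is not a factor of w.take m
          have hpnotu : p ∉ Pal (w.take m) := by
            rintro ⟨hinf, -⟩
            obtain ⟨j, hj, hjocc⟩ := occ_of_infix hinf
            have hjle : j + p.length ≤ m := by
              rw [List.length_take] at hj; omega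
            -- transfer the occurrence to v
            have htake : w.take m = v.take m := by
              rw [hvdef, List.take_take]; congr 1; omega
            have hoccv : (v.drop j).take p.length = p := by
              rw [htake, List.drop_take, List.take_take, min_eq_left (by omega)] at hjocc
              exact hjocc
            have h1 := huniq j ⟨by omega, hoccv⟩
            have h2 := huniq (v.length - p.length) ⟨hsle, hsocc⟩
            omega
          -- so Pal (w.take m) ∪ {p} ⊆ Pal v
          have hsub : insert p (Pal (w.take m)) ⊆ Pal v := by
            rintro q hq
            rcases hq with rfl | hq
            · exact ⟨hps.isInfix, hpal⟩
            · have : w.take m <+: v := by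
                rw [hvdef, List.prefix_iff_eq_take, List.length_take,
                  min_eq_left hmle, List.take_take]
                congr 1; omega
              exact pal_mono this.isInfix hq
          have hins : (insert p (Pal (w.take m))).ncard = (Pal (w.take m)).ncard + 1 :=
            Set.ncard_insert_of_notMem hpnotu (pal_finite _)
          have hle' := Set.ncard_le_ncard hsub (pal_finite v)
          have := ih hmle
          omega
    have := hge w.length le_rfl
    rw [List.take_length] at this
    exact le_antisymm hle this
end

section
/- Let φ be the substitution φ(i) = 0^t(i+1) for i < m-1, φ(m-1) = 0^s with t ≥ s ≥ 1, on alphabet {0,...,m-1}. For any finite word p over the alphabet, φ(p)·0^t is a palindrome if and only if p is a palindrome. -/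
/-- The canonical substitution associated with a simple Parry number `β` with
`d_β(1) = t t ⋯ t s` (`m` digits): `φ(i) = 0^t (i+1)` for `i ≤ m-2` and
`φ(m-1) = 0^s`.  Letters are encoded as natural numbers `0, …, m-1`. -/
def phi (m t s : ℕ) : ℕ → List ℕ := fun a =>
  if a = m - 1 then List.replicate s 0 else List.replicate t 0 ++ [a + 1]

/-- Application of a morphism to a finite word. -/
def applyMorph (f : ℕ → List ℕ) (l : List ℕ) : List ℕ := l.flatMap f

/-- `w` is a factor of the fixed point `u_β = lim φⁿ(0)` of the substitution,
i.e. `w` is a factor of some `φⁿ(0)`. -/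
def inLang (f : ℕ → List ℕ) (w : List ℕ) : Prop :=
  ∃ k : ℕ, w <:+: (applyMorph f)^[k] [0]

lemma phi_ne_nil (m t s : ℕ) (hs : 1 ≤ s) (a : ℕ) : phi m t s a ≠ [] := by
  unfold phi
  split <;> simp [List.replicate_eq_nil_iff]
  omega

lemma phi_last (m t s : ℕ) (hs : 1 ≤ s) (a : ℕ) :
    (phi m t s a).getLast? = some (if a = m - 1 then 0 else a + 1) := by
  unfold phi
  split
  next h => simp [h, List.getLast?_replicate]; omega
  next h => simp [h, List.getLast?_concat]

lemma phi_last_inj (m t s : ℕ) (hs : 1 ≤ s) {a b : ℕ}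
    (h : (phi m t s a).getLast? = (phi m t s b).getLast?) : a = b := by
  rw [phi_last m t s hs, phi_last m t s hs] at h
  simp at h
  split at h <;> split at h <;> omega

lemma applyMorph_append (f : ℕ → List ℕ) (l₁ l₂ : List ℕ) :
    applyMorph f (l₁ ++ l₂) = applyMorph f l₁ ++ applyMorph f l₂ := by
  simp [applyMorph]

lemma applyMorph_inj (m t s : ℕ) (hs : 1 ≤ s) :
    ∀ p q : List ℕ, applyMorph (phi m t s) p = applyMorph (phi m t s) q → p = q := by
  intro p
  induction p using List.reverseRecOn with
  | nil =>
    intro q h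
    cases q using List.reverseRecOn with
    | nil => rfl
    | append_singleton q' b =>
      rw [applyMorph_append] at h
      simp [applyMorph] at h
      exact absurd h.2 (phi_ne_nil m t s hs b)
  | append_singleton p' a ih =>
    intro q h
    cases q using List.reverseRecOn with
    | nil =>
      rw [applyMorph_append] at h
      simp [applyMorph] at h
      exact absurd h.2 (phi_ne_nil m t s hs a)
    | append_singleton q' b =>
      rw [applyMorph_append, applyMorph_append] at h
      have hne_a := phi_ne_nil m t s hs a
      have hne_b := phi_ne_nil m t s hs b
      have hab : a = b := by
        have h1 : (applyMorph (phi m t s) p' ++ applyMorph (phi m t s) [a]).getLast?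
            = (applyMorph (phi m t s) q' ++ applyMorph (phi m t s) [b]).getLast? := by rw [h]
        simp only [applyMorph, List.flatMap_cons, List.flatMap_nil, List.append_nil,
          List.getLast?_append, phi_last m t s hs, Option.some_or] at h1
        simp only [Option.some.injEq] at h1
        split at h1 <;> split at h1 <;> omega
      subst hab
      have hpq : applyMorph (phi m t s) p' = applyMorph (phi m t s) q' :=
        List.append_cancel_right h
      rw [ih q' hpq]

lemma mirror_letter (m t s : ℕ) (hts : s ≤ t) (a : ℕ) :
    List.replicate t 0 ++ (phi m t s a).reverse = phi m t s a ++ List.replicate t 0 := by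
  unfold phi
  split
  · simp only [List.reverse_replicate, ← List.replicate_add]
    rw [Nat.add_comm]
  · simp

lemma mirror (m t s : ℕ) (hts : s ≤ t) (q : List ℕ) :
    (applyMorph (phi m t s) q ++ List.replicate t 0).reverse
      = applyMorph (phi m t s) q.reverse ++ List.replicate t 0 := by
  induction q with
  | nil => simp [applyMorph, List.reverse_replicate]
  | cons a q' ih =>
    have : applyMorph (phi m t s) (a :: q') = phi m t s a ++ applyMorph (phi m t s) q' := by
      simp [applyMorph]
    rw [this, List.append_assoc, List.reverse_append, ih]
    rw [show (a :: q').reverse = q'.reverse ++ [a] from by simp, applyMorph_append]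
    have : applyMorph (phi m t s) [a] = phi m t s a := by simp [applyMorph]
    rw [this, List.append_assoc, List.append_assoc, ← mirror_letter m t s hts a]

/-- For any finite word `p` over the alphabet, `φ(p)·0^t` is a palindrome if
and only if `p` is a palindrome. -/
theorem stmt4 (m t s : ℕ) (hm : 1 ≤ m) (hs : 1 ≤ s) (hts : s ≤ t)
    (p : List ℕ) (hp : ∀ a ∈ p, a < m) :
    (applyMorph (phi m t s) p ++ List.replicate t 0).reverse
        = applyMorph (phi m t s) p ++ List.replicate t 0
      ↔ p.reverse = p := by
  rw [mirror m t s hts p]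
  constructor
  · intro h
    exact applyMorph_inj m t s hs _ _ (List.append_cancel_right h)
  · intro h
    rw [h]
end

section
/- Let φ be the substitution φ(i) = 0^t(i+1) for i < m-1, φ(m-1) = 0^s with t ≥ s ≥ 1, and let u_β be its fixed point starting with 0. Every factor of u_β of the form X 0^n Y with letters X, Y both nonzero satisfies: either n = t, or n = t+s with X = Y = 1. -/
/-- No two adjacent nonzero letters. -/
def NoAdj (v : List ℕ) : Prop := ∀ x y : ℕ, [x, y] <:+: v → x = 0 ∨ y = 0

lemma NoAdj.mono {u v : List ℕ} (h : u <:+: v) (hv : NoAdj v) : NoAdj u :=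
  fun x y hxy => hv x y (hxy.trans h)

lemma applyMorph_cons (f : ℕ → List ℕ) (b : ℕ) (v : List ℕ) :
    applyMorph f (b :: v) = f b ++ applyMorph f v := by
  simp [applyMorph]

lemma split_zeros {q : ℕ} {A pre rest : List ℕ} {X : ℕ} (hX : X ≠ 0)
    (h : List.replicate q 0 ++ A = pre ++ X :: rest) :
    ∃ pre', pre = List.replicate q 0 ++ pre' ∧ A = pre' ++ X :: rest := by
  induction q generalizing pre with
  | zero => exact ⟨pre, by simp, by simpa using h⟩
  | succ q ih =>
    rw [List.replicate_succ] at h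
    cases pre with
    | nil =>
      simp at h
      exact absurd h.1.symm hX
    | cons p pre2 =>
      simp only [List.cons_append, List.cons.injEq] at h
      obtain ⟨hp, h2⟩ := h
      obtain ⟨pre', h3, h4⟩ := ih h2
      exact ⟨pre', by simp [List.replicate_succ, h3, ← hp], h4⟩

lemma repl_eq {p q Y Z : ℕ} {r r' : List ℕ} (hY : Y ≠ 0) (hZ : Z ≠ 0)
    (h : List.replicate p (0:ℕ) ++ Y :: r = List.replicate q 0 ++ Z :: r') :
    p = q ∧ Y = Z ∧ r = r' := by
  induction p generalizing q with
  | zero =>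
    cases q with
    | zero =>
      simp at h
      exact ⟨rfl, h.1, h.2⟩
    | succ q =>
      rw [List.replicate_succ] at h
      simp at h
      exact absurd h.1 hY
  | succ p ih =>
    cases q with
    | zero =>
      rw [List.replicate_succ] at h
      simp at h
      exact absurd h.1.symm hZ
    | succ q =>
      rw [List.replicate_succ, List.replicate_succ] at h
      simp only [List.cons_append, List.cons.injEq, true_and] at h
      obtain ⟨hp, hyz, hr⟩ := ih h
      exact ⟨by omega, hyz, hr⟩

lemma repl_le {p q Y : ℕ} {r u : List ℕ} (hY : Y ≠ 0)
    (h : List.replicate p (0:ℕ) ++ Y :: r = List.replicate q 0 ++ u) :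
    q ≤ p ∧ u = List.replicate (p - q) 0 ++ Y :: r := by
  obtain ⟨pre', h1, h2⟩ := split_zeros hY h.symm
  have hlen : p = q + pre'.length := by
    have := congrArg List.length h1
    simpa using this
  have hpre : pre' = List.replicate (p - q) (0:ℕ) := by
    have : List.replicate p (0:ℕ) = List.replicate q (0:ℕ) ++ List.replicate (p - q) (0:ℕ) := by
      rw [← List.replicate_add]
      congr 1
      omega
    rw [this] at h1
    exact (List.append_cancel_left h1).symm
  constructor
  · omega
  · rw [h2, hpre]

/-- A nonzero letter in the image occurs exactly at the end of a block
`φ(a)` with `a ≠ m - 1`, and what follows is the image of the remaining word. -/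
lemma lemC (m t s : ℕ) : ∀ (v pre rest : List ℕ) (X : ℕ), X ≠ 0 →
    applyMorph (phi m t s) v = pre ++ X :: rest →
    ∃ v₁ a v₂, v = v₁ ++ a :: v₂ ∧ a ≠ m - 1 ∧ X = a + 1 ∧
      rest = applyMorph (phi m t s) v₂ := by
  intro v
  induction v with
  | nil =>
    intro pre rest X hX h
    simp [applyMorph] at h
  | cons b v' ih =>
    intro pre rest X hX h
    rw [applyMorph_cons] at h
    by_cases hb : b = m - 1
    · rw [phi, if_pos hb] at h
      obtain ⟨pre', hpre, hA⟩ := split_zeros hX h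
      obtain ⟨v₁, a, v₂, h1, h2, h3, h4⟩ := ih pre' rest X hX hA
      exact ⟨b :: v₁, a, v₂, by rw [h1]; rfl, h2, h3, h4⟩
    · rw [phi] at h
      simp only [if_neg hb] at h
      rw [List.append_assoc] at h
      obtain ⟨pre', hpre, hA⟩ := split_zeros hX h
      cases pre' with
      | nil =>
        simp only [List.nil_append, List.singleton_append, List.cons.injEq] at hA
        exact ⟨[], b, v', rfl, hb, hA.1.symm, hA.2.symm⟩
      | cons p pre₂ =>
        simp only [List.cons_append, List.singleton_append, List.cons.injEq] at hA
        obtain ⟨hp, hA2⟩ := hA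
        obtain ⟨v₁, a, v₂, h1, h2, h3, h4⟩ := ih pre₂ rest X hX hA2
        exact ⟨b :: v₁, a, v₂, by rw [h1]; rfl, h2, h3, h4⟩

/-- Description of the leading zeros of the image of a word. -/
lemma lemB (m t s : ℕ) (hm : 2 ≤ m) (hs : 1 ≤ s) (ht : 1 ≤ t)
    {v : List ℕ} (hNA : NoAdj v) {n Y : ℕ} {r : List ℕ} (hY : Y ≠ 0)
    (h : applyMorph (phi m t s) v = List.replicate n 0 ++ Y :: r) :
    n = t ∨ (n = t + s ∧ Y = 1 ∧ ∃ v₃, v = (m - 1) :: 0 :: v₃) := by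
  cases v with
  | nil =>
    simp [applyMorph] at h
  | cons b v' =>
    rw [applyMorph_cons] at h
    by_cases hb : b = m - 1
    · rw [phi, if_pos hb] at h
      obtain ⟨hle, h2⟩ := repl_le hY h.symm
      cases v' with
      | nil =>
        simp [applyMorph] at h2
      | cons c v'' =>
        have hc : c = 0 := by
          rcases hNA b c ⟨[], v'', by simp⟩ with h0 | h0
          · omega
          · exact h0
        subst hc
        rw [applyMorph_cons, phi, if_neg (by omega)] at h2
        rw [List.append_assoc] at h2
        have h3 : List.replicate (n - s) (0:ℕ) ++ Y :: r
            = List.replicate t 0 ++ (0 + 1) :: applyMorph (phi m t s) v'' := by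
          rw [← h2]
          simp
        obtain ⟨hns, hY1, _⟩ := repl_eq hY (by omega) h3
        right
        refine ⟨by omega, by omega, v'', by rw [hb]⟩
    · rw [phi] at h
      simp only [if_neg hb] at h
      rw [List.append_assoc] at h
      have h3 : List.replicate n (0:ℕ) ++ Y :: r
          = List.replicate t 0 ++ (b + 1) :: applyMorph (phi m t s) v' := by
        rw [← h]
        simp
      obtain ⟨hnt, _, _⟩ := repl_eq hY (by omega) h3
      exact Or.inl hnt

/-- The image of any word has no two adjacent nonzero letters. -/
lemma noAdj_applyMorph (m t s : ℕ) (hs : 1 ≤ s) (ht : 1 ≤ t) (v : List ℕ) :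
    NoAdj (applyMorph (phi m t s) v) := by
  intro x y hxy
  by_cases hx : x = 0
  · exact Or.inl hx
  right
  obtain ⟨pre, post, hdecomp⟩ := hxy
  have h : applyMorph (phi m t s) v = pre ++ x :: (y :: post) := by
    rw [← hdecomp]; simp
  obtain ⟨v₁, a, v₂, h1, h2, h3, h4⟩ := lemC m t s v pre (y :: post) x hx h
  cases v₂ with
  | nil => simp [applyMorph] at h4
  | cons c v₃ =>
    rw [applyMorph_cons] at h4
    by_cases hc : c = m - 1
    · rw [phi, if_pos hc] at h4
      obtain ⟨s', rfl⟩ : ∃ s', s = s' + 1 := ⟨s - 1, by omega⟩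
      rw [List.replicate_succ] at h4
      simp at h4
      exact h4.1
    · rw [phi, if_neg hc] at h4
      obtain ⟨t', rfl⟩ : ∃ t', t = t' + 1 := ⟨t - 1, by omega⟩
      rw [List.replicate_succ] at h4
      simp at h4
      exact h4.1

lemma step (m t s : ℕ) (hm : 2 ≤ m) (hs : 1 ≤ s) (ht : 1 ≤ t)
    {v : List ℕ} (hNA : NoAdj v) {X Y n : ℕ} (hX : X ≠ 0) (hY : Y ≠ 0)
    (h : [X] ++ List.replicate n 0 ++ [Y] <:+: applyMorph (phi m t s) v) :
    n = t ∨ (n = t + s ∧ X = 1 ∧ Y = 1) := by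
  obtain ⟨pre, post, hdecomp⟩ := h
  have h1 : applyMorph (phi m t s) v = pre ++ X :: (List.replicate n 0 ++ Y :: post) := by
    rw [← hdecomp]; simp
  obtain ⟨v₁, a, v₂, hv, ha, hXa, hrest⟩ := lemC m t s v pre _ X hX h1
  have hNA2 : NoAdj v₂ := hNA.mono ⟨v₁ ++ [a], [], by simp [hv]⟩
  rcases lemB m t s hm hs ht hNA2 hY hrest.symm with hn | ⟨hn, hY1, v₃, hv₂⟩
  · exact Or.inl hn
  · right
    refine ⟨hn, ?_, hY1⟩
    have ham : [a, m - 1] <:+: v := ⟨v₁, 0 :: v₃, by simp [hv, hv₂]⟩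
    rcases hNA a (m - 1) ham with h0 | h0
    · omega
    · omega

/-- Every factor of `u_β` of the form `X 0^n Y` with `X, Y` nonzero letters
satisfies: either `n = t`, or `n = t + s` with `X = Y = 1`. -/
theorem stmt5 (m t s : ℕ) (hm : 2 ≤ m) (hs : 1 ≤ s) (hts : s ≤ t)
    (X Y n : ℕ) (hX : X ≠ 0) (hY : Y ≠ 0)
    (h : inLang (phi m t s) ([X] ++ List.replicate n 0 ++ [Y])) :
    n = t ∨ (n = t + s ∧ X = 1 ∧ Y = 1) := by
  obtain ⟨k, hk⟩ := h
  have ht : 1 ≤ t := hs.trans hts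
  cases k with
  | zero =>
    have := hk.length_le
    simp at this
  | succ k =>
    rw [Function.iterate_succ_apply'] at hk
    have hNA : NoAdj ((applyMorph (phi m t s))^[k] [0]) := by
      cases k with
      | zero =>
        intro x y hxy
        have := hxy.length_le
        simp at this
      | succ k' =>
        rw [Function.iterate_succ_apply']
        exact noAdj_applyMorph m t s hs ht _
    exact step m t s hm hs ht hNA hX hY hk
end

section
/- Let φ be the substitution φ(i) = 0^t(i+1) for i < m-1, φ(m-1) = 0^s with t ≥ s ≥ 2, and u_β its fixed point. Then the palindrome 0^{t+s-1} is a maximal palindrome of u_β: it is a factor of u_β, but a·0^{t+s-1}·a is not a factor of u_β for any letter a. -/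
namespace Stmt9Aux

open List

/-- No two adjacent nonzero letters. -/
abbrev Rel : ℕ → ℕ → Prop := fun a b => a = 0 ∨ b = 0

lemma get_rep_app_lt {i n : ℕ} (h : i < n) (l : List ℕ) :
    (replicate n (0:ℕ) ++ l)[i]? = some 0 := by
  rw [getElem?_append_left (by simpa using h)]
  simp [getElem?_replicate, h]

lemma get_rep_app_eq (n : ℕ) (l : List ℕ) :
    (replicate n (0:ℕ) ++ l)[n]? = l[0]? := by
  rw [getElem?_append_right (by simp)]
  simp

lemma drop_rep (n : ℕ) (l : List ℕ) : (replicate n (0:ℕ) ++ l).drop n = l := by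
  rw [drop_append_of_le_length (by simp), drop_replicate]
  simp

lemma drop_rep' {k n : ℕ} (hk : k ≤ n) (l : List ℕ) :
    (replicate n (0:ℕ) ++ l).drop k = replicate (n - k) 0 ++ l := by
  rw [drop_append_of_le_length (by simpa using hk), drop_replicate]

lemma drop_rep_cons (n : ℕ) (a : ℕ) (l : List ℕ) :
    (replicate n (0:ℕ) ++ a :: l).drop (n + 1) = l := by
  induction n with
  | zero => simp
  | succ n ih => simpa [replicate_succ] using ih

lemma F_cons (f : ℕ → List ℕ) (a : ℕ) (l : List ℕ) :
    applyMorph f (a :: l) = f a ++ applyMorph f l := by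
  simp [applyMorph]

lemma chain_rep_app (n : ℕ) (l : List ℕ) (hl : Chain' Rel l) :
    Chain' Rel (replicate n 0 ++ l) := by
  induction n with
  | zero => simpa
  | succ n ih =>
    rw [replicate_succ, cons_append]
    exact ih.cons (by intro y _; left; rfl)

lemma head_zero (m t s : ℕ) (hs : 1 ≤ s) (ht : 1 ≤ t) (v : List ℕ) :
    ∀ y ∈ (applyMorph (phi m t s) v).head?, y = 0 := by
  intro y hy
  cases v with
  | nil => simp [applyMorph] at hy
  | cons c v' =>
    simp only [applyMorph, flatMap_cons, phi] at hy
    by_cases hc : c = m - 1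
    · obtain ⟨s1, rfl⟩ : ∃ s1, s = s1 + 1 := ⟨s - 1, by omega⟩
      simp [hc, replicate_succ] at hy
      exact hy.symm
    · obtain ⟨t1, rfl⟩ : ∃ t1, t = t1 + 1 := ⟨t - 1, by omega⟩
      simp [hc, replicate_succ] at hy
      exact hy.symm

lemma chain_F (m t s : ℕ) (hs : 1 ≤ s) (ht : 1 ≤ t) (v : List ℕ) :
    Chain' Rel (applyMorph (phi m t s) v) := by
  induction v with
  | nil => exact isChain_nil
  | cons c v' ih =>
    rw [F_cons, show Chain' Rel = List.IsChain Rel from rfl, isChain_append]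
    refine ⟨?_, ih, ?_⟩
    · unfold phi
      split
      · have := chain_rep_app s [] isChain_nil; rw [append_nil] at this; exact this
      · exact chain_rep_app t [c + 1] (isChain_singleton _)
    · intro x _ y hy
      right
      exact head_zero m t s hs ht v' y hy

/-- `F v` has no prefix of the form `0^{t+s-1} x` with `x ≠ 0`. -/
lemma no_pref (m t s : ℕ) (hm : 2 ≤ m) (hs : 2 ≤ s) (ht : 2 ≤ t) (v : List ℕ)
    (hv : Chain' Rel v) (x : ℕ) (hx : x ≠ 0) :
    ¬ (replicate (t + s - 1) 0 ++ [x]) <+: applyMorph (phi m t s) v := by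
  intro h
  obtain ⟨w, hw⟩ := h
  rw [append_assoc] at hw
  -- hw : replicate (t+s-1) 0 ++ ([x] ++ w) = applyMorph (phi m t s) v
  cases v with
  | nil =>
    have := congrArg List.length hw
    simp [applyMorph] at this
  | cons c v' =>
    by_cases hc : c = m - 1
    · subst hc
      cases v' with
      | nil =>
        have := congrArg List.length hw
        simp [applyMorph, phi] at this
        omega
      | cons c' v'' =>
        have hc' : c' = 0 := by
          rcases (isChain_cons_cons.mp hv).1 with h0 | h0
          · omega
          · exact h0
        subst hc'
        have h0m : (0 : ℕ) ≠ m - 1 := by omega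
        have hword : applyMorph (phi m t s) ((m - 1) :: 0 :: v'')
            = replicate (s + t) 0 ++ ([1] ++ applyMorph (phi m t s) v'') := by
          rw [show applyMorph (phi m t s) ((m - 1) :: 0 :: v'')
              = phi m t s (m - 1) ++ (phi m t s 0 ++ applyMorph (phi m t s) v'')
              by simp [applyMorph],
            show phi m t s (m - 1) = replicate s 0 from if_pos rfl,
            show phi m t s 0 = replicate t 0 ++ [1] from if_neg h0m,
            replicate_add, append_assoc, append_assoc]
        rw [hword] at hw
        have h1 : (replicate (t + s - 1) (0:ℕ) ++ ([x] ++ w))[t + s - 1]?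
            = (replicate (s + t) (0:ℕ)
                ++ ([1] ++ applyMorph (phi m t s) v''))[t + s - 1]? := by
          rw [hw]
        rw [get_rep_app_eq, get_rep_app_lt (by omega)] at h1
        simp at h1
        omega
    · have hword : applyMorph (phi m t s) (c :: v')
          = replicate t 0 ++ ((c + 1) :: applyMorph (phi m t s) v') := by
        simp [applyMorph, phi, hc]
      rw [hword] at hw
      have h1 : (replicate (t + s - 1) (0:ℕ) ++ ([x] ++ w))[t]?
          = (replicate t (0:ℕ) ++ ((c + 1) :: applyMorph (phi m t s) v'))[t]? := by
        rw [hw]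
      rw [get_rep_app_lt (by omega), get_rep_app_eq] at h1
      simp at h1

/-- Main lemma: `x 0^{t+s-1} x` is not a factor of `0^j ++ F v`, for `j ≤ s`,
provided `v` has no adjacent nonzero letters and, if `j > 0`, does not start
with `m-1`. -/
lemma main (m t s : ℕ) (hm : 2 ≤ m) (hs : 2 ≤ s) (hts : s ≤ t) :
    ∀ v : List ℕ, Chain' Rel v → ∀ x j : ℕ, j ≤ s →
      (0 < j → v.head? ≠ some (m - 1)) →
      ¬ (x :: (replicate (t + s - 1) 0 ++ [x])) <:+:
        (replicate j 0 ++ applyMorph (phi m t s) v) := by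
  intro v
  induction v with
  | nil =>
    intro _ x j hj _ h
    have := h.length_le
    simp [applyMorph] at this
    omega
  | cons c v' ih =>
    intro hv x j hj hhead h
    have hv' : Chain' Rel v' := hv.tail
    by_cases hc : c = m - 1
    · subst hc
      have hj0 : j = 0 := by
        by_contra hne
        exact hhead (by omega) rfl
      subst hj0
      have hw : replicate 0 (0 : ℕ) ++ applyMorph (phi m t s) ((m - 1) :: v')
          = replicate s 0 ++ applyMorph (phi m t s) v' := by
        simp [applyMorph, phi]
      rw [hw] at h
      refine ih hv' x s le_rfl ?_ h
      intro _
      cases v' with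
      | nil => simp
      | cons c' v'' =>
        rcases (isChain_cons_cons.mp hv).1 with h0 | h0
        · omega
        · simp only [head?_cons, h0, ne_eq, Option.some.injEq]
          omega
    · obtain ⟨u, w', hw⟩ := h
      have hword : replicate j (0 : ℕ) ++ applyMorph (phi m t s) (c :: v')
          = replicate (j + t) 0 ++ ((c + 1) :: applyMorph (phi m t s) v') := by
        rw [F_cons, show phi m t s c = replicate t 0 ++ [c + 1] from if_neg hc]
        simp [append_assoc]
        rw [replicate_add, append_assoc]
      rw [append_assoc, hword] at hw
      set W' := applyMorph (phi m t s) v' with hW'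
      set L := t + s - 1 with hL
      -- hw : u ++ ((x :: (replicate L 0 ++ [x])) ++ w') = replicate (j+t) 0 ++ (c+1) :: W'
      rcases lt_trichotomy u.length (j + t) with hlt | heq | hgt
      · -- occurrence starts strictly inside the zero block
        have hdrop := congrArg (List.drop u.length) hw
        rw [drop_left, drop_rep' (le_of_lt hlt)] at hdrop
        obtain ⟨d2, hd⟩ : ∃ d2, j + t - u.length = d2 + 1 :=
          ⟨j + t - u.length - 1, by omega⟩
        rw [hd, replicate_succ, cons_append] at hdrop
        -- hdrop : x :: (...) = 0 :: (...)
        injection hdrop with h1 h2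
        subst h1
        simp only [List.append_eq] at h2
        rw [show (replicate L (0:ℕ) ++ [0]) ++ w' = replicate (L + 1) 0 ++ w' by
          rw [← replicate_succ']] at h2
        have h3 : (replicate (L + 1) (0:ℕ) ++ w')[d2]?
            = (replicate d2 (0:ℕ) ++ ((c + 1) :: W'))[d2]? := by rw [h2]
        rw [get_rep_app_eq, get_rep_app_lt (by omega)] at h3
        simp at h3
      · -- occurrence starts exactly at the nonzero letter
        have hdrop := congrArg (List.drop u.length) hw
        rw [drop_left, heq, drop_rep, cons_append] at hdrop
        injection hdrop with h1 h2
        try simp only [List.append_eq] at h2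
        exact no_pref m t s hm hs (le_trans hs hts) v' hv' x (by omega)
          ⟨w', h2⟩
      · -- occurrence starts after the nonzero letter
        have hdrop := congrArg (List.drop (j + t + 1)) hw
        rw [drop_append_of_le_length (by omega), drop_rep_cons] at hdrop
        exact ih hv' x 0 (by omega) (by intro h0; exact absurd h0 (lt_irrefl 0))
          ⟨u.drop (j + t + 1), w', by
            simpa [append_assoc] using hdrop⟩

lemma infix_morph (f : ℕ → List ℕ) {w v : List ℕ} (h : w <:+: v) :
    applyMorph f w <:+: applyMorph f v := by
  obtain ⟨u, w', rfl⟩ := h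
  exact ⟨applyMorph f u, applyMorph f w', by simp [applyMorph]⟩

lemma step (f : ℕ → List ℕ) {w : List ℕ} {k : ℕ}
    (h : w <:+: (applyMorph f)^[k] [0]) :
    applyMorph f w <:+: (applyMorph f)^[k + 1] [0] := by
  rw [Function.iterate_succ_apply']
  exact infix_morph f h

lemma mid (tt j : ℕ) (htt : 1 ≤ tt) (u z : List ℕ) :
    ([j, 0] : List ℕ) <:+: u ++ ([j] ++ replicate tt 0 ++ z) := by
  obtain ⟨t1, rfl⟩ : ∃ t1, tt = t1 + 1 := ⟨tt - 1, by omega⟩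
  refine ⟨u, replicate t1 0 ++ z, ?_⟩
  simp [replicate_succ]

end Stmt9Aux

open Stmt9Aux List in
/-- For `t ≥ s ≥ 2`, the palindrome `0^{t+s-1}` is a maximal palindrome of
`u_β`: it is a factor of `u_β`, but `a·0^{t+s-1}·a` is not a factor of `u_β`
for any letter `a`. -/
theorem stmt9 (m t s : ℕ) (hm : 2 ≤ m) (hs : 2 ≤ s) (hts : s ≤ t) :
    inLang (phi m t s) (List.replicate (t + s - 1) 0) ∧
      ∀ a : ℕ, a < m →
        ¬ inLang (phi m t s) ([a] ++ List.replicate (t + s - 1) 0 ++ [a]) := by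
  have ht : 2 ≤ t := le_trans hs hts
  have h0m : (0 : ℕ) ≠ m - 1 := by omega
  have hphi0 : phi m t s 0 = replicate t 0 ++ [1] := by simp [phi, h0m]
  constructor
  · -- Part 1 : 0^{t+s-1} is a factor
    have base : ∀ j : ℕ, 1 ≤ j → j ≤ m - 1 →
        ∃ k, ([j, 0] : List ℕ) <:+: (applyMorph (phi m t s))^[k] [0] := by
      intro j hj1 hj2
      induction j with
      | zero => omega
      | succ j ihj =>
        by_cases hj0 : j = 0
        · subst hj0
          -- base case : [1,0] is a factor of φ²(0)
          obtain ⟨t2, ht2⟩ : ∃ t2, t = t2 + 2 := ⟨t - 2, by omega⟩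
          have h0 : ([0] : List ℕ) <:+: (applyMorph (phi m t s))^[0] [0] := by
            simp
          have h1 := step (phi m t s) h0
          have e1 : applyMorph (phi m t s) [0] = replicate t 0 ++ [1] := by
            rw [F_cons, hphi0]
            simp [applyMorph]
          rw [e1] at h1
          have h2 := step (phi m t s) h1
          have hsp : replicate t (0:ℕ) ++ [1]
              = 0 :: 0 :: (replicate t2 0 ++ [1]) := by
            rw [show t = 1 + (1 + t2) by omega, replicate_add, replicate_add]
            simp
          have e2 : applyMorph (phi m t s) (replicate t 0 ++ [1])
              = replicate t 0 ++ ([1] ++ replicate t 0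
                  ++ ([1] ++ applyMorph (phi m t s) (replicate t2 0 ++ [1]))) := by
            rw [hsp, F_cons, F_cons, hphi0]
            simp [append_assoc]
          rw [e2] at h2
          exact ⟨2, (mid t 1 (by omega) (replicate t 0) _).trans h2⟩
        · obtain ⟨k, hk⟩ := ihj (by omega) (by omega)
          have hjne : j ≠ m - 1 := by omega
          have h2 := step (phi m t s) hk
          have e2 : applyMorph (phi m t s) [j, 0]
              = replicate t 0 ++ ([j + 1] ++ replicate t 0 ++ [1]) := by
            rw [F_cons, F_cons]
            simp [applyMorph, phi, hjne, h0m, append_assoc]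
          rw [e2] at h2
          exact ⟨k + 1, (mid t (j + 1) (by omega) (replicate t 0) _).trans h2⟩
    obtain ⟨k, hk⟩ := base (m - 1) (by omega) le_rfl
    have h2 := step (phi m t s) hk
    have e2 : applyMorph (phi m t s) [m - 1, 0]
        = replicate (t + s - 1) 0 ++ (replicate 1 0 ++ [1]) := by
      have e3 : applyMorph (phi m t s) [m - 1, 0]
          = replicate (s + t) 0 ++ [1] := by
        rw [F_cons, F_cons,
          show phi m t s (m - 1) = replicate s 0 from if_pos rfl,
          show phi m t s 0 = replicate t 0 ++ [1] from if_neg h0m]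
        simp [applyMorph, append_assoc]
        rw [replicate_add, append_assoc]
      rw [e3, show s + t = (t + s - 1) + 1 by omega, replicate_add,
        append_assoc]
    rw [e2] at h2
    refine ⟨k + 1, List.IsInfix.trans ?_ h2⟩
    exact ⟨[], replicate 1 0 ++ [1], by simp⟩
  · -- Part 2
    rintro a _ ⟨k, hk⟩
    cases k with
    | zero =>
      have := hk.length_le
      simp at this
    | succ k' =>
      rw [Function.iterate_succ_apply'] at hk
      have hch : Chain' Rel ((applyMorph (phi m t s))^[k'] [0]) := by
        cases k' with
        | zero => exact isChain_singleton 0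
        | succ k'' =>
          rw [Function.iterate_succ_apply']
          exact chain_F m t s (by omega) (by omega) _
      have hmain := main m t s hm hs hts _ hch a 0 (by omega)
        (by intro h0; exact absurd h0 (lt_irrefl 0))
      simp only [replicate_zero, nil_append] at hmain
      refine hmain ?_
      have : ([a] ++ replicate (t + s - 1) 0 ++ [a])
          = a :: (replicate (t + s - 1) 0 ++ [a]) := by simp
      rw [← this]
      exact hk
end

section
/- Let φ be the substitution φ(i) = 0^t(i+1) for i < m-1, φ(m-1) = 0^s with t ≥ s ≥ 2, and u_β its fixed point. Then the palindrome 0^t has exactly two palindromic extensions in u_β, namely 0·0^t·0 and 1·0^t·1. -/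
open List

lemma preLem : ∀ (j t' : ℕ) (b e : ℕ) (z : List ℕ), b ≠ 0 → j ≤ t' →
    (replicate j 0 ++ [b]) <+: (replicate t' 0 ++ [e] ++ z) → j = t' ∧ b = e := by
  intro j
  induction j with
  | zero =>
    intro t' b e z hb hjt hpre
    cases t' with
    | zero =>
      simp only [replicate, nil_append] at hpre
      obtain ⟨y, hy⟩ := hpre
      simp only [singleton_append, cons_append, cons.injEq] at hy
      exact ⟨rfl, hy.1⟩
    | succ t'' =>
      simp only [replicate_succ, nil_append, cons_append] at hpre
      obtain ⟨y, hy⟩ := hpre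
      simp only [replicate, nil_append, cons_append, cons.injEq] at hy
      exact absurd hy.1 hb
  | succ j ih =>
    intro t' b e z hb hjt hpre
    cases t' with
    | zero => omega
    | succ t'' =>
      simp only [replicate_succ, cons_append] at hpre
      rw [List.cons_prefix_cons] at hpre
      obtain ⟨-, hpre⟩ := hpre
      obtain ⟨h1, h2⟩ := ih t'' b e z hb (by omega) hpre
      exact ⟨by omega, h2⟩

lemma lemE (m t s : ℕ) (hm : 2 ≤ m) (hs : 2 ≤ s) (hts : s ≤ t) :
    ∀ (w : List ℕ) (j b : ℕ), b ≠ 0 → j ≤ t →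
    (replicate j 0 ++ [b]) <+: applyMorph (phi m t s) w →
    j = t ∧ ∃ w', w = (b - 1) :: w' := by
  intro w
  induction w with
  | nil =>
    intro j b hb hjt hpre
    simp [applyMorph] at hpre
  | cons c w' ih =>
    intro j b hb hjt hpre
    by_cases hc : c = m - 1
    · -- block is 0^s
      have hfc : phi m t s c = replicate s 0 := by simp [phi, hc]
      rw [show applyMorph (phi m t s) (c :: w') =
          phi m t s c ++ applyMorph (phi m t s) w' from by
            simp [applyMorph], hfc] at hpre
      -- j ≥ s
      have hjs : s ≤ j := by
        by_contra hlt
        push_neg at hlt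
        have : replicate s (0:ℕ) = replicate j 0 ++ replicate (s - j) 0 := by
          rw [← replicate_add]; congr 1; omega
        rw [this, append_assoc, prefix_append_right_inj] at hpre
        obtain ⟨y, hy⟩ := hpre
        have hsj : s - j = (s - j - 1) + 1 := by omega
        rw [hsj, replicate_succ] at hy
        simp only [singleton_append, cons_append, cons.injEq] at hy
        exact hb hy.1
      have hsplit : replicate j (0:ℕ) = replicate s 0 ++ replicate (j - s) 0 := by
        rw [← replicate_add]; congr 1; omega
      rw [hsplit, append_assoc, prefix_append_right_inj] at hpre
      obtain ⟨h1, -⟩ := ih (j - s) b hb (by omega) hpre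
      omega
    · have hfc : phi m t s c = replicate t 0 ++ [c + 1] := by simp [phi, hc]
      rw [show applyMorph (phi m t s) (c :: w') =
          phi m t s c ++ applyMorph (phi m t s) w' from by
            simp [applyMorph], hfc] at hpre
      obtain ⟨h1, h2⟩ := preLem j t b (c + 1) (applyMorph (phi m t s) w') hb hjt
        hpre
      exact ⟨h1, w', by rw [h2]; simp⟩

lemma sufLem : ∀ (t' x h : ℕ) (tl : List ℕ), h ≠ 0 →
    (h :: tl) <:+ (replicate t' 0 ++ [x]) → h :: tl = [x] := by
  intro t'
  induction t' with
  | zero =>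
    intro x h tl hh hsuf
    simp only [replicate, nil_append] at hsuf
    rcases suffix_cons_iff.mp hsuf with h1 | h1
    · exact h1
    · simp at h1
  | succ t'' ih =>
    intro x h tl hh hsuf
    rw [replicate_succ, cons_append] at hsuf
    rcases suffix_cons_iff.mp hsuf with h1 | h1
    · injection h1 with h1a h1b
      exact absurd h1a hh
    · exact ih x h tl hh h1

lemma lemD (m t s : ℕ) (hm : 2 ≤ m) (hs : 2 ≤ s) (hts : s ≤ t) :
    ∀ (w : List ℕ) (a b g : ℕ), a ≠ 0 → b ≠ 0 → g ≤ t →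
    ([a] ++ replicate g 0 ++ [b]) <:+: applyMorph (phi m t s) w →
    g = t ∧ [a - 1, b - 1] <:+: w := by
  intro w
  induction w with
  | nil =>
    intro a b g ha hb hgt hinf
    simp [applyMorph] at hinf
  | cons c w' ih =>
    intro a b g ha hb hgt hinf
    obtain ⟨u, v, huv⟩ := hinf
    rw [show applyMorph (phi m t s) (c :: w') =
        phi m t s c ++ applyMorph (phi m t s) w' from by simp [applyMorph]] at huv
    rw [append_assoc] at huv
    rcases append_eq_append_iff.mp huv.symm with ⟨a', ha1, ha2⟩ | ⟨c', hc1, hc2⟩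
    · -- u = phi c ++ a', occurrence inside F w'
      have : ([a] ++ replicate g 0 ++ [b]) <:+: applyMorph (phi m t s) w' := by
        rw [ha2]
        exact ⟨a', v, by simp [append_assoc]⟩
      obtain ⟨h1, h2⟩ := ih a b g ha hb hgt this
      exact ⟨h1, h2.trans (by exact (suffix_cons c w').isInfix)⟩
    · -- phi c = u ++ c', pattern ++ v = c' ++ F w'
      cases c' with
      | nil =>
        have : ([a] ++ replicate g 0 ++ [b]) <:+: applyMorph (phi m t s) w' := by
          exact ⟨[], v, by simpa [append_assoc] using hc2⟩
        obtain ⟨h1, h2⟩ := ih a b g ha hb hgt this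
        exact ⟨h1, h2.trans (suffix_cons c w').isInfix⟩
      | cons h tl =>
        have hc2' : a :: (replicate g 0 ++ [b] ++ v)
            = h :: (tl ++ applyMorph (phi m t s) w') := by
          simpa [append_assoc] using hc2
        injection hc2' with e1 e2
        subst e1
        by_cases hc : c = m - 1
        · have hfc : phi m t s c = replicate s 0 := by simp [phi, hc]
          have hmem : a ∈ replicate s (0:ℕ) := by
            rw [← hfc, hc1]; simp
          exact absurd (eq_of_mem_replicate hmem) ha
        · have hfc : phi m t s c = replicate t 0 ++ [c + 1] := by simp [phi, hc]
          have hsuf : (a :: tl) <:+ (replicate t 0 ++ [c + 1]) := by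
            rw [← hfc]; exact ⟨u, hc1.symm⟩
          have heq := sufLem t (c + 1) a tl ha hsuf
          injection heq with e3 e4
          subst e4
          simp only [nil_append] at e2
          have hpre : (replicate g 0 ++ [b]) <+: applyMorph (phi m t s) w' := by
            rw [← e2]; exact ⟨v, by rw [append_assoc]⟩
          obtain ⟨h1, w'', hw''⟩ := lemE m t s hm hs hts w' g b hb hgt hpre
          refine ⟨h1, ?_⟩
          subst hw''
          have : [a - 1, b - 1] <+: c :: (b - 1) :: w'' := by
            rw [e3]; simp
          exact this.isInfix

lemma monoLem (f : ℕ → List ℕ) {w v : List ℕ} (h : w <:+: v) :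
    applyMorph f w <:+: applyMorph f v := by
  obtain ⟨u, x, rfl⟩ := h
  exact ⟨applyMorph f u, applyMorph f x, by simp [applyMorph, List.flatMap_append]⟩

lemma lemL (m t s : ℕ) (hm : 2 ≤ m) (hs : 2 ≤ s) (hts : s ≤ t) :
    ∀ j, 1 ≤ j → j ≤ m - 1 →
    (replicate t 0 ++ [j, 0]) <:+: (applyMorph (phi m t s))^[j + 1] [0] := by
  have h0 : phi m t s 0 = replicate t 0 ++ [1] := by
    simp only [phi, if_neg (show (0:ℕ) ≠ m - 1 by omega)]
  have ht1 : replicate t (0:ℕ) = 0 :: replicate (t - 1) 0 := by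
    rw [← replicate_succ]; congr 1; omega
  intro j hj
  induction j, hj using Nat.le_induction with
  | base =>
    intro _
    rw [Function.iterate_succ_apply', Function.iterate_succ_apply',
      Function.iterate_zero_apply]
    have h1 : applyMorph (phi m t s) [0] = replicate t 0 ++ [1] := by
      simp [applyMorph, h0]
    rw [h1]
    have ht2 : replicate t (0:ℕ) ++ [1] =
        0 :: 0 :: (replicate (t - 2) 0 ++ [1]) := by
      rw [show t = (t - 2) + 1 + 1 from by omega]
      simp [replicate_succ]
    rw [ht2,
      show applyMorph (phi m t s) (0 :: 0 :: (replicate (t - 2) 0 ++ [1])) =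
        phi m t s 0 ++ (phi m t s 0 ++
          applyMorph (phi m t s) (replicate (t - 2) 0 ++ [1])) from by
      simp [applyMorph], h0]
    refine ⟨[], replicate (t - 1) 0 ++ [1] ++
      applyMorph (phi m t s) (replicate (t - 2) 0 ++ [1]), ?_⟩
    rw [ht1]
    simp [append_assoc]
  | succ j hj ih =>
    intro hjm
    have hij := ih (by omega)
    have happ := monoLem (phi m t s) hij
    rw [Function.iterate_succ_apply']
    refine IsInfix.trans ?_ happ
    have hj' : phi m t s j = replicate t 0 ++ [j + 1] := by
      simp only [phi, if_neg (show j ≠ m - 1 by omega)]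
    rw [show applyMorph (phi m t s) (replicate t 0 ++ [j, 0]) =
        applyMorph (phi m t s) (replicate t 0) ++ (phi m t s j ++ phi m t s 0) from by
      simp [applyMorph, List.flatMap_append], h0, hj']
    refine ⟨applyMorph (phi m t s) (replicate t 0),
      replicate (t - 1) 0 ++ [1], ?_⟩
    conv_lhs => rw [ht1]
    simp [append_assoc, ht1]


/-- For `t ≥ s ≥ 2`, the palindrome `0^t` has exactly two palindromic
extensions in `u_β`, namely `0·0^t·0` and `1·0^t·1`. -/
theorem stmt10 (m t s : ℕ) (hm : 2 ≤ m) (hs : 2 ≤ s) (hts : s ≤ t) :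
    inLang (phi m t s) ([0] ++ List.replicate t 0 ++ [0]) ∧
    inLang (phi m t s) ([1] ++ List.replicate t 0 ++ [1]) ∧
    ∀ a : ℕ, a < m →
      inLang (phi m t s) ([a] ++ List.replicate t 0 ++ [a]) → a = 0 ∨ a = 1 := by
  have h0 : phi m t s 0 = replicate t 0 ++ [1] := by
    simp only [phi, if_neg (show (0:ℕ) ≠ m - 1 by omega)]
  have hlast : phi m t s (m - 1) = replicate s 0 := by simp [phi]
  have key : ∀ (p q : ℕ) (x : List ℕ),
      replicate p (0:ℕ) ++ (replicate q 0 ++ x) = replicate (p + q) 0 ++ x := by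
    intro p q x; rw [← append_assoc, ← replicate_add]
  refine ⟨?_, ?_, ?_⟩
  · -- 0 0^t 0
    refine ⟨m + 1, ?_⟩
    have hL := lemL m t s hm hs hts (m - 1) (by omega) le_rfl
    rw [show m - 1 + 1 = m from by omega] at hL
    have happ := monoLem (phi m t s) hL
    rw [Function.iterate_succ_apply']
    refine IsInfix.trans ?_ happ
    rw [show applyMorph (phi m t s) (replicate t 0 ++ [m - 1, 0]) =
        applyMorph (phi m t s) (replicate t 0) ++
          (phi m t s (m - 1) ++ phi m t s 0) from by
      simp [applyMorph], h0, hlast]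
    refine ⟨applyMorph (phi m t s) (replicate t 0),
      replicate (s - 2) 0 ++ [1], ?_⟩
    simp only [append_assoc]
    congr 1
    rw [show ([0] : List ℕ) = replicate 1 0 from rfl]
    rw [key, key, key, key]
    rw [show 1 + t + 1 + (s - 2) = s + t from by omega]
  · -- 1 0^t 1
    refine ⟨2, ?_⟩
    rw [show (2:ℕ) = 1 + 1 from rfl, Function.iterate_succ_apply',
      Function.iterate_succ_apply', Function.iterate_zero_apply]
    have h1 : applyMorph (phi m t s) [0] = replicate t 0 ++ [1] := by
      simp [applyMorph, h0]
    rw [h1]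
    have ht2 : replicate t (0:ℕ) ++ [1] =
        0 :: 0 :: (replicate (t - 2) 0 ++ [1]) := by
      rw [show t = (t - 2) + 1 + 1 from by omega]
      simp [replicate_succ]
    rw [ht2,
      show applyMorph (phi m t s) (0 :: 0 :: (replicate (t - 2) 0 ++ [1])) =
        phi m t s 0 ++ (phi m t s 0 ++
          applyMorph (phi m t s) (replicate (t - 2) 0 ++ [1])) from by
      simp [applyMorph], h0]
    exact ⟨replicate t 0,
      applyMorph (phi m t s) (replicate (t - 2) 0 ++ [1]),
      by simp [append_assoc]⟩
  · -- exactly two extensions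
    intro a ham hinl
    rcases Nat.lt_or_ge a 2 with h2 | h2
    · omega
    exfalso
    obtain ⟨k, hk⟩ := hinl
    cases k with
    | zero =>
      have := hk.length_le
      simp at this
    | succ k' =>
      rw [Function.iterate_succ_apply'] at hk
      obtain ⟨-, hinf⟩ := lemD m t s hm hs hts _ a a t
        (by omega) (by omega) le_rfl hk
      cases k' with
      | zero =>
        have := hinf.length_le
        simp at this
      | succ k'' =>
        rw [Function.iterate_succ_apply'] at hinf
        obtain ⟨h1, -⟩ := lemD m t s hm hs hts _ (a - 1) (a - 1) 0
          (by omega) (by omega) (by omega) (by simpa using hinf)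
        omega
end

section
/- Let φ be the substitution φ(i) = 0^t(i+1) for i < m-1, φ(m-1) = 0^s with t ≥ s ≥ 1. If p and q are palindromes with q a central factor of p (i.e., p = w·q·reverse(w) for some word w), then φ(q)·0^t is a central factor of φ(p)·0^t. -/
lemma phi_letter_comm (m t s : ℕ) (a : ℕ) :
    List.replicate t 0 ++ (phi m t s a).reverse = phi m t s a ++ List.replicate t 0 := by
  unfold phi
  by_cases h : a = m - 1 <;> simp [h, List.reverse_append]
  · omega

lemma phi_word_comm (m t s : ℕ) (u : List ℕ) :
    List.replicate t 0 ++ (applyMorph (phi m t s) u).reverse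
      = applyMorph (phi m t s) u.reverse ++ List.replicate t 0 := by
  induction u with
  | nil => simp [applyMorph]
  | cons a v ih =>
    have hsplit : applyMorph (phi m t s) (a :: v)
        = phi m t s a ++ applyMorph (phi m t s) v := by
      simp [applyMorph]
    have hrev : applyMorph (phi m t s) (a :: v).reverse
        = applyMorph (phi m t s) v.reverse ++ phi m t s a := by
      simp [applyMorph]
    rw [hsplit, hrev, List.reverse_append, ← List.append_assoc, ih,
      List.append_assoc, phi_letter_comm, List.append_assoc]

/-- If `p` and `q` are palindromes over the alphabet and `q` is a central
factor of `p` (i.e. `p = w·q·reverse(w)`), then `φ(q)·0^t` is a central factor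
of `φ(p)·0^t`. -/
theorem stmt11 (m t s : ℕ) (hm : 1 ≤ m) (hs : 1 ≤ s) (hts : s ≤ t)
    (p q : List ℕ) (hp : ∀ a ∈ p, a < m) (hq : ∀ a ∈ q, a < m)
    (hpp : p.reverse = p) (hqq : q.reverse = q)
    (w : List ℕ) (hc : p = w ++ q ++ w.reverse) :
    ∃ w' : List ℕ,
      applyMorph (phi m t s) p ++ List.replicate t 0
        = w' ++ (applyMorph (phi m t s) q ++ List.replicate t 0) ++ w'.reverse := by
  refine ⟨applyMorph (phi m t s) w, ?_⟩
  subst hc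
  have h1 : applyMorph (phi m t s) (w ++ q ++ w.reverse)
      = applyMorph (phi m t s) w ++ applyMorph (phi m t s) q
        ++ applyMorph (phi m t s) w.reverse := by
    simp [applyMorph]
  rw [h1]
  have := phi_word_comm m t s w
  simp only [List.append_assoc]
  rw [← this]
end

section
/- Let φ be the substitution φ(i) = 0^t(i+1) for i < m-1, φ(m-1) = 0^s with t ≥ s ≥ 1. If p₁ = w₁·a·reverse(w₁) is a palindrome of odd length with center a ≠ m-1, then φ(p₁)·0^t = w₂·(a+1)·reverse(w₂) where w₂ = φ(w₁)·0^t; in particular φ(p₁)·0^t is a palindrome of odd length with center a+1. -/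
/-- If `p₁ = w₁·a·reverse(w₁)` is an odd palindrome with center `a ≠ m-1`,
then `φ(p₁)·0^t = w₂·(a+1)·reverse(w₂)` with `w₂ = φ(w₁)·0^t`. -/
theorem stmt12 (m t s : ℕ) (hm : 1 ≤ m) (hs : 1 ≤ s) (hts : s ≤ t)
    (w₁ : List ℕ) (hw : ∀ x ∈ w₁, x < m)
    (a : ℕ) (ha : a < m) (ham : a ≠ m - 1) :
    applyMorph (phi m t s) (w₁ ++ [a] ++ w₁.reverse) ++ List.replicate t 0
      = (applyMorph (phi m t s) w₁ ++ List.replicate t 0) ++ [a + 1]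
          ++ (applyMorph (phi m t s) w₁ ++ List.replicate t 0).reverse := by
  have key : ∀ w : List ℕ,
      applyMorph (phi m t s) w.reverse ++ List.replicate t 0
        = List.replicate t 0 ++ (applyMorph (phi m t s) w).reverse := by
    intro w
    induction w with
    | nil => simp [applyMorph]
    | cons x w ih =>
      have : applyMorph (phi m t s) (w.reverse ++ [x])
          = applyMorph (phi m t s) w.reverse ++ phi m t s x := by
        simp [applyMorph]
      simp only [List.reverse_cons, this, List.append_assoc]
      by_cases hx : x = m - 1
      · have hc : phi m t s x ++ List.replicate t 0
            = List.replicate t 0 ++ phi m t s x := by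
          simp [phi, hx, ← List.replicate_add, Nat.add_comm]
        rw [hc, ← List.append_assoc, ih]
        simp [applyMorph, phi, hx, List.reverse_replicate]
      · have hrev : (phi m t s x).reverse = [x + 1] ++ List.replicate t 0 := by
          simp [phi, hx, List.reverse_replicate]
        calc applyMorph (phi m t s) w.reverse ++ (phi m t s x ++ List.replicate t 0)
            = (applyMorph (phi m t s) w.reverse ++ List.replicate t 0)
                ++ ([x + 1] ++ List.replicate t 0) := by
              simp [phi, hx, List.append_assoc]
          _ = List.replicate t 0 ++ ((applyMorph (phi m t s) w).reverse
                ++ (phi m t s x).reverse) := by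
              rw [ih, hrev]; simp [List.append_assoc]
          _ = _ := by simp [applyMorph]
  have happ : ∀ u v : List ℕ, applyMorph (phi m t s) (u ++ v)
      = applyMorph (phi m t s) u ++ applyMorph (phi m t s) v := by
    intro u v; simp [applyMorph]
  have hφa : applyMorph (phi m t s) [a] = List.replicate t 0 ++ [a + 1] := by
    simp [applyMorph, phi, ham]
  rw [happ, happ, hφa]
  simp only [List.append_assoc]
  rw [key w₁]
  simp [List.reverse_replicate, List.append_assoc]
end

section
/- Let φ be the substitution φ(i) = 0^t(i+1) for i < m-1, φ(m-1) = 0^s with t ≥ s ≥ 1 and t even. If p₁ = w₁·reverse(w₁) is a palindrome of even length, then φ(p₁)·0^t = w₂·reverse(w₂) where w₂ = φ(w₁)·0^{t/2}; i.e., φ(p₁)·0^t is a palindrome of even length. -/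
lemma phi_letter (m t s : ℕ) (a : ℕ) :
    phi m t s a ++ List.replicate t 0
      = List.replicate t 0 ++ (phi m t s a).reverse := by
  unfold phi
  by_cases h : a = m - 1 <;> simp [h, List.reverse_replicate, ← List.replicate_add,
    Nat.add_comm]

lemma key_s13 (m t s : ℕ) (w : List ℕ) :
    applyMorph (phi m t s) w.reverse ++ List.replicate t 0
      = List.replicate t 0 ++ (applyMorph (phi m t s) w).reverse := by
  induction w with
  | nil => simp [applyMorph]
  | cons a w ih =>
      have h1 : applyMorph (phi m t s) (a :: w) = phi m t s a ++ applyMorph (phi m t s) w := by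
        simp [applyMorph]
      have h2 : applyMorph (phi m t s) [a] = phi m t s a := by simp [applyMorph]
      rw [List.reverse_cons, applyMorph_append, h1, List.reverse_append,
        List.append_assoc, h2, phi_letter, ← List.append_assoc, ih]
      simp [applyMorph]

/-- For `t` even: if `p₁ = w₁·reverse(w₁)` is an even palindrome, then
`φ(p₁)·0^t = w₂·reverse(w₂)` with `w₂ = φ(w₁)·0^{t/2}`. -/
theorem stmt13 (m t s : ℕ) (hm : 1 ≤ m) (hs : 1 ≤ s) (hts : s ≤ t)
    (ht : Even t) (w₁ : List ℕ) (hw : ∀ x ∈ w₁, x < m) :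
    applyMorph (phi m t s) (w₁ ++ w₁.reverse) ++ List.replicate t 0
      = (applyMorph (phi m t s) w₁ ++ List.replicate (t / 2) 0)
          ++ (applyMorph (phi m t s) w₁ ++ List.replicate (t / 2) 0).reverse := by
  obtain ⟨k, hk⟩ := ht
  have hk2 : t / 2 = k := by omega
  rw [applyMorph_append, List.append_assoc, key_s13, List.reverse_append,
    List.reverse_replicate, hk2, hk, List.replicate_add]
  simp only [List.append_assoc]
end

section
/- Define V^(1) = 0^t and V^(n+1) = φ(V^(n))·0^t, where φ is the substitution φ(i) = 0^t(i+1) for i < m-1, φ(m-1) = 0^s, with t odd and s even, t ≥ s ≥ 2. Then for every n ≥ 1, V^(n) is a palindrome of odd length whose center is the letter congruent to n-1 modulo m, and V^(n) is a central factor of V^(n+m). -/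
def Vseq (m t s : ℕ) : ℕ → List ℕ
  | 0 => List.replicate t 0
  | n + 1 => applyMorph (phi m t s) (Vseq m t s n) ++ List.replicate t 0

def psi (m t s : ℕ) : ℕ → List ℕ := fun a =>
  if a = m - 1 then List.replicate s 0 else (a + 1) :: List.replicate t 0

lemma rev_phi (m t s a : ℕ) : (phi m t s a).reverse = psi m t s a := by
  unfold phi psi; split <;> simp

lemma rev_apply (m t s : ℕ) (u : List ℕ) :
    (applyMorph (phi m t s) u).reverse = applyMorph (psi m t s) u.reverse := by
  unfold applyMorph
  rw [List.reverse_flatMap]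
  congr 1
  funext a
  exact rev_phi m t s a

lemma shift (m t s : ℕ) (u : List ℕ) :
    applyMorph (phi m t s) u ++ List.replicate t 0
      = List.replicate t 0 ++ applyMorph (psi m t s) u := by
  induction u with
  | nil => simp [applyMorph]
  | cons a u ih =>
    unfold applyMorph at *
    rw [List.flatMap_cons, List.flatMap_cons, List.append_assoc, ih,
        ← List.append_assoc, ← List.append_assoc]
    congr 1
    unfold phi psi
    split
    · rw [← List.replicate_add, ← List.replicate_add, Nat.add_comm]
    · simp

lemma rep_merge (a b : ℕ) :
    List.replicate a (0:ℕ) ++ [0] ++ List.replicate b (0:ℕ)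
      = List.replicate (a + 1 + b) (0:ℕ) := by
  rw [List.replicate_add, List.replicate_add]; rfl

lemma vmain (m t s : ℕ) (hm : 1 ≤ m) (j : ℕ) (hj : t = 2 * j + 1)
    (e : ℕ) (hse : s = e + e) (n : ℕ) :
    ∃ w : List ℕ, Vseq m t s n
      = (w ++ List.replicate j 0) ++ [n % m] ++ (w ++ List.replicate j 0).reverse := by
  induction n with
  | zero =>
    refine ⟨[], ?_⟩
    simp only [Vseq, Nat.zero_mod, List.nil_append, List.reverse_replicate]
    rw [rep_merge]
    congr 1
    omega
  | succ n ih =>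
    obtain ⟨w, hw⟩ := ih
    set W := w ++ List.replicate j 0 with hW
    have key : Vseq m t s (n + 1)
        = applyMorph (phi m t s) W ++ (phi m t s (n % m) ++ List.replicate t 0)
            ++ (applyMorph (phi m t s) W).reverse := by
      show applyMorph (phi m t s) (Vseq m t s n) ++ List.replicate t 0 = _
      rw [hw]
      unfold applyMorph
      rw [List.flatMap_append, List.flatMap_append, List.append_assoc,
          List.append_assoc, List.append_assoc]
      have : (W.reverse.flatMap (phi m t s)) ++ List.replicate t 0
          = List.replicate t 0 ++ (W.flatMap (phi m t s)).reverse := by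
        have h1 := shift m t s W.reverse
        unfold applyMorph at h1
        rw [h1]
        congr 1
        have h2 := rev_apply m t s W
        unfold applyMorph at h2
        rw [h2]
      rw [this]
      simp [applyMorph, List.flatMap_cons, List.append_assoc]
    by_cases hc : n % m = m - 1
    · have hmod : (n + 1) % m = 0 := by
        rcases Nat.eq_or_lt_of_le hm with h | h
        · rw [← h]; exact Nat.mod_one _
        · have h1 : 1 % m = 1 := Nat.mod_eq_of_lt h
          rw [Nat.add_mod, h1, hc, show m - 1 + 1 = m by omega, Nat.mod_self]
      have hphi : phi m t s (n % m) = List.replicate s 0 := by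
        unfold phi; rw [if_pos hc]
      refine ⟨applyMorph (phi m t s) W ++ List.replicate e 0, ?_⟩
      rw [key, hmod, hphi, ← List.replicate_add,
          show s + t = ((e + j) + 1) + (j + e) by omega,
          List.replicate_add, List.replicate_add, List.replicate_add,
          List.replicate_add]
      simp only [List.reverse_append, List.reverse_replicate, List.append_assoc,
        List.replicate_one, List.cons_append, List.nil_append, List.singleton_append]
    · have hlt : n % m < m - 1 := by
        have := Nat.mod_lt n (show 0 < m by omega)
        omega
      have hmod : (n + 1) % m = n % m + 1 := by
        have h1 : 1 % m = 1 := Nat.mod_eq_of_lt (by omega)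
        rw [Nat.add_mod, h1, Nat.mod_eq_of_lt (by omega)]
      have hphi : phi m t s (n % m) = List.replicate t 0 ++ [n % m + 1] := by
        unfold phi; rw [if_neg hc]
      have e1 : List.replicate t (0:ℕ) = List.replicate (j+1) 0 ++ List.replicate j 0 := by
        rw [← List.replicate_add]; congr 1; omega
      have e2 : List.replicate t (0:ℕ) = List.replicate j 0 ++ List.replicate (j+1) 0 := by
        rw [← List.replicate_add]; congr 1; omega
      refine ⟨applyMorph (phi m t s) W ++ List.replicate (j + 1) 0, ?_⟩
      rw [key, hmod, hphi]
      nth_rewrite 1 [e1]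
      nth_rewrite 1 [e2]
      simp only [List.reverse_append, List.reverse_replicate, List.append_assoc,
        List.cons_append, List.nil_append, List.singleton_append]

/-- For `t` odd and `s` even (`t ≥ s ≥ 2`), the palindrome `V⁽ⁿ⁺¹⁾ = Vseq n`
has odd length with center the letter `n mod m` (i.e. congruent to the paper's
`n - 1` modulo `m`), and it is a central factor of `V⁽ⁿ⁺¹⁺ᵐ⁾`. -/
theorem stmt16 (m t s : ℕ) (hm : 1 ≤ m) (hs : 2 ≤ s) (hts : s ≤ t)
    (ht : Odd t) (hse : Even s) (n : ℕ) :
    (∃ w : List ℕ, Vseq m t s n = w ++ [n % m] ++ w.reverse) ∧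
      ∃ w' : List ℕ, Vseq m t s (n + m) = w' ++ Vseq m t s n ++ w'.reverse := by
  obtain ⟨j, hj⟩ := ht
  obtain ⟨e, hse'⟩ := hse
  have hj' : t = 2 * j + 1 := by omega
  constructor
  · obtain ⟨w, hw⟩ := vmain m t s hm j hj' e hse' n
    exact ⟨w ++ List.replicate j 0, hw⟩
  · induction n with
    | zero =>
      obtain ⟨w, hw⟩ := vmain m t s hm j hj' e hse' m
      refine ⟨w, ?_⟩
      rw [Nat.zero_add, hw, Nat.mod_self]
      show _ = w ++ List.replicate t 0 ++ w.reverse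
      rw [show t = j + 1 + j by omega, List.replicate_add, List.replicate_add]
      simp [List.append_assoc]
    | succ n ih =>
      obtain ⟨w', hw'⟩ := ih
      refine ⟨applyMorph (phi m t s) w', ?_⟩
      rw [show n + 1 + m = (n + m) + 1 by omega]
      show applyMorph (phi m t s) (Vseq m t s (n + m)) ++ List.replicate t 0 = _
      rw [hw']
      unfold applyMorph
      rw [List.flatMap_append, List.flatMap_append, List.append_assoc, List.append_assoc]
      have h1 := shift m t s w'.reverse
      unfold applyMorph at h1
      rw [h1]
      have h2 := rev_apply m t s w'
      unfold applyMorph at h2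
      rw [← List.reverse_reverse (w'.reverse.flatMap (psi m t s)), ← h2,
          List.reverse_reverse]
      show _ = w'.flatMap (phi m t s) ++ ((Vseq m t s n).flatMap (phi m t s)
          ++ List.replicate t 0) ++ (w'.flatMap (phi m t s)).reverse
      simp [List.append_assoc]
end

section
/- Let u be an infinite word with bounded palindromic complexity, i.e., there is a constant B with P(n) ≤ B for all n, where P(n) is the number of palindromic factors of u of length n. Then u has only finitely many infinite palindromic branches. -/
/-- The pair `(c, v)` (center `c`, a letter or `none` for the empty word, and
left-infinite word `⋯v₃v₂v₁` encoded by `v : ℕ → A` with `v 0 = v₁`) is an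
infinite palindromic branch of `u`: all its central factors
`vₙ⋯v₁ c v₁⋯vₙ` are factors of `u`. -/
def IsPalindromicBranch {A : Type*} (u : ℕ → A) (c : Option A) (v : ℕ → A) : Prop :=
  ∀ n : ℕ, IsFactor u
    (((List.range n).map v).reverse ++ c.toList ++ (List.range n).map v)

/-- An infinite word over a finite alphabet with bounded palindromic
complexity has only finitely many infinite palindromic branches. -/
theorem stmt17 {A : Type*} [Fintype A] (u : ℕ → A)
    (hB : ∃ B : ℕ, ∀ n : ℕ,
      {p : List A | IsFactor u p ∧ p.reverse = p ∧ p.length = n}.ncard ≤ B) :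
    {cv : Option A × (ℕ → A) | IsPalindromicBranch u cv.1 cv.2}.Finite := by
  classical
  obtain ⟨B, hB⟩ := hB
  set S := {cv : Option A × (ℕ → A) | IsPalindromicBranch u cv.1 cv.2} with hS
  by_contra hfin
  rw [← Set.not_infinite, not_not] at hfin
  obtain ⟨T, hTS, hTcard⟩ := hfin.exists_subset_card_eq (2 * B + 1)
  -- difference index
  have hD : ∀ x y : Option A × (ℕ → A), x.2 ≠ y.2 → ∃ n, x.2 n ≠ y.2 n := by
    intro x y h
    by_contra hc
    push_neg at hc
    exact h (funext hc)
  set D : Option A × (ℕ → A) → Option A × (ℕ → A) → ℕ := fun x y =>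
    if h : x.2 = y.2 then 0 else Nat.find (hD x y h) with hDdef
  set N : ℕ := (T.sup fun x => T.sup fun y => D x y) + 1 with hN
  have hDlt : ∀ x ∈ T, ∀ y ∈ T, D x y < N := by
    intro x hx y hy
    have h1 : D x y ≤ T.sup fun y' => D x y' := Finset.le_sup hy
    have h2 : (T.sup fun y' => D x y') ≤ T.sup fun x' => T.sup fun y' => D x' y' :=
      Finset.le_sup (f := fun x' => T.sup fun y' => D x' y') hx
    omega
  set F : Option A × (ℕ → A) → List A := fun x =>
    (((List.range N).map x.2).reverse ++ x.1.toList ++ (List.range N).map x.2) with hF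
  have hFlen : ∀ x : Option A × (ℕ → A), (F x).length = 2 * N + x.1.toList.length := by
    intro x
    simp [hF]
    ring
  -- F maps T into the union of palindromic factor sets of lengths 2N, 2N+1
  set P : ℕ → Set (List A) := fun n =>
    {p : List A | IsFactor u p ∧ p.reverse = p ∧ p.length = n} with hP
  have hPfin : ∀ n, (P n).Finite := by
    intro n
    exact (List.finite_length_eq A n).subset (fun p hp => hp.2.2)
  have hctl : ∀ c : Option A, c.toList.reverse = c.toList := by
    intro c; cases c <;> rfl
  have hmem : ∀ x ∈ T, F x ∈ P (2 * N) ∪ P (2 * N + 1) := by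
    intro x hx
    have hxS : x ∈ S := hTS hx
    have hfac : IsFactor u (F x) := hxS N
    have hpal : (F x).reverse = F x := by
      simp [hF, List.reverse_append, hctl]
    cases hc : x.1 with
    | none =>
      left
      refine ⟨hfac, hpal, ?_⟩
      rw [hFlen, hc]; rfl
    | some a =>
      right
      refine ⟨hfac, hpal, ?_⟩
      rw [hFlen, hc]; rfl
  -- F is injective on T
  have hinj : Set.InjOn F T := by
    intro x hx y hy hxy
    have hxy' : ((List.range N).map x.2).reverse ++ (x.1.toList ++ (List.range N).map x.2)
        = ((List.range N).map y.2).reverse ++ (y.1.toList ++ (List.range N).map y.2) := by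
      simpa [hF, List.append_assoc] using hxy
    obtain ⟨h1, h2⟩ := List.append_inj hxy' (by simp)
    have hmap : (List.range N).map x.2 = (List.range N).map y.2 := by
      have := congrArg List.reverse h1
      simpa using this
    have hc1 : x.1 = y.1 := by
      rw [hmap] at h2
      have h3 : x.1.toList = y.1.toList := by
        have := congrArg List.reverse h2
        simp only [List.reverse_append] at this
        have h4 := List.append_cancel_left this
        have := congrArg List.reverse h4
        simpa using this
      cases hx1 : x.1 <;> cases hy1 : y.1 <;> simp_all
    have hpt : ∀ n ∈ List.range N, x.2 n = y.2 n := List.map_eq_map_iff.mp hmap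
    have hv : x.2 = y.2 := by
      by_contra hv
      have hlt := hDlt x hx y hy
      have heq : x.2 (D x y) = y.2 (D x y) := hpt _ (List.mem_range.mpr hlt)
      have hDv : D x y = Nat.find (hD x y hv) := by simp [hDdef, hv]
      exact (Nat.find_spec (hD x y hv)) (hDv ▸ heq)
    exact Prod.ext hc1 hv
  -- counting
  have hcard : T.card ≤ 2 * B := by
    have h1 : (T : Set (Option A × (ℕ → A))).ncard = (F '' T).ncard :=
      (Set.ncard_image_of_injOn hinj).symm
    have h2 : (F '' T) ⊆ P (2 * N) ∪ P (2 * N + 1) := by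
      rintro _ ⟨x, hx, rfl⟩; exact hmem x hx
    have h3 : (F '' T).ncard ≤ (P (2 * N) ∪ P (2 * N + 1)).ncard :=
      Set.ncard_le_ncard h2 ((hPfin _).union (hPfin _))
    have h4 : (P (2 * N) ∪ P (2 * N + 1)).ncard ≤ (P (2 * N)).ncard + (P (2 * N + 1)).ncard :=
      Set.ncard_union_le _ _
    have h5 : (P (2 * N)).ncard ≤ B := hB (2 * N)
    have h6 : (P (2 * N + 1)).ncard ≤ B := hB (2 * N + 1)
    have hTn : (T : Set (Option A × (ℕ → A))).ncard = T.card := Set.ncard_coe_finset T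
    omega
  omega
end

section
/- Let φ be the substitution φ(i) = 0^t(i+1) for i < m-1, φ(m-1) = 0^s with t ≥ s ≥ 1 and t, s both odd. Then the word w = φ^m(0^{(t+1)/2})·0^{(t-s)/2} is a prefix of φ^{m+1}(a)·w for every letter a in {0,...,m-1}. -/
namespace Stmt19Aux

variable (m t s : ℕ)

lemma F_append (x y : List ℕ) :
    applyMorph (phi m t s) (x ++ y)
      = applyMorph (phi m t s) x ++ applyMorph (phi m t s) y :=
  List.flatMap_append

lemma Fk_nil (k : ℕ) : (applyMorph (phi m t s))^[k] [] = [] := by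
  induction k with
  | zero => rfl
  | succ n ih => rw [Function.iterate_succ_apply]; exact ih

lemma Fk_append (k : ℕ) (x y : List ℕ) :
    (applyMorph (phi m t s))^[k] (x ++ y)
      = (applyMorph (phi m t s))^[k] x ++ (applyMorph (phi m t s))^[k] y := by
  induction k generalizing x y with
  | zero => simp
  | succ n ih => simp [Function.iterate_succ_apply, F_append, ih]

lemma Fk_replicate (k n : ℕ) :
    (applyMorph (phi m t s))^[k] (List.replicate n 0)
      = (List.replicate n ((applyMorph (phi m t s))^[k] [0])).flatten := by
  induction n with
  | zero => simp [Fk_nil]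
  | succ n ih =>
      rw [List.replicate_succ, List.replicate_succ, List.flatten_cons, ← ih,
        show (0 :: List.replicate n 0) = [0] ++ List.replicate n 0 from rfl,
        Fk_append]

lemma F_ne_nil (l : List ℕ) (hs : 1 ≤ s) (hl : l ≠ []) :
    applyMorph (phi m t s) l ≠ [] := by
  cases l with
  | nil => exact absurd rfl hl
  | cons a r =>
      show (a :: r).flatMap (phi m t s) ≠ []
      rw [List.flatMap_cons]
      intro h
      rcases List.append_eq_nil_iff.1 h with ⟨h1, _⟩
      unfold phi at h1
      split at h1 <;> simp_all

lemma Fk_ne_nil (k : ℕ) (l : List ℕ) (hs : 1 ≤ s) (hl : l ≠ []) :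
    (applyMorph (phi m t s))^[k] l ≠ [] := by
  induction k generalizing l with
  | zero => simpa
  | succ n ih =>
      rw [Function.iterate_succ_apply]
      exact ih _ (F_ne_nil m t s l hs hl)

/-- F^[k] [0] starts with 0 -/
lemma Fk_head (k : ℕ) (hs : 1 ≤ s) (ht : 1 ≤ t) :
    ∃ r, (applyMorph (phi m t s))^[k] [0] = 0 :: r := by
  induction k with
  | zero => exact ⟨[], rfl⟩
  | succ n ih =>
      rcases ih with ⟨r, hr⟩
      rw [Function.iterate_succ_apply', hr,
        show (0 : ℕ) :: r = [0] ++ r from rfl, F_append]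
      show ∃ r', [0].flatMap (phi m t s) ++ _ = 0 :: r'
      rw [List.flatMap_cons, List.flatMap_nil, List.append_nil]
      unfold phi
      split
      · obtain ⟨s', rfl⟩ : ∃ s', s = s' + 1 := ⟨s - 1, by omega⟩
        rw [List.replicate_succ]
        exact ⟨_, rfl⟩
      · obtain ⟨t', rfl⟩ : ∃ t', t = t' + 1 := ⟨t - 1, by omega⟩
        rw [List.replicate_succ]
        exact ⟨_, rfl⟩

/-- key: `0^d` is a prefix of `P ++ 0^d` for `d ≤ t`, where `P = F^[m][0]`, `m ≥ 1`. -/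
lemma zeros_prefix (hm : 1 ≤ m) (hs : 1 ≤ s) (ht : 1 ≤ t) (d : ℕ) (hd : d ≤ t) :
    List.replicate d 0 <+:
      ((applyMorph (phi m t s))^[m] [0] ++ List.replicate d 0) := by
  rcases Nat.lt_or_ge m 2 with hm2 | hm2
  · -- m = 1 : P = 0^s
    interval_cases m
    have h1 : (applyMorph (phi 1 t s))^[1] [0] = List.replicate s 0 := by
      simp [applyMorph, phi]
    rw [h1]
    exact ⟨List.replicate s 0,
      by rw [← List.replicate_add, ← List.replicate_add, Nat.add_comm]⟩
  · -- m ≥ 2 : P starts with 0^t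
    obtain ⟨r, hr⟩ := Fk_head m t s (m - 1) hs ht
    have hstep := Function.iterate_succ_apply' (applyMorph (phi m t s)) (m-1) [0]
    rw [Nat.succ_eq_add_one, Nat.sub_add_cancel hm] at hstep
    have hP : (applyMorph (phi m t s))^[m] [0]
        = List.replicate t 0 ++ ([0+1] ++ applyMorph (phi m t s) r) := by
      rw [hstep, hr, show (0 : ℕ) :: r = [0] ++ r from rfl, F_append,
        ← List.append_assoc]
      congr 1
      show [0].flatMap (phi m t s) = _
      rw [List.flatMap_cons, List.flatMap_nil, List.append_nil]
      unfold phi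
      rw [if_neg (by omega)]
    rw [hP, List.append_assoc]
    refine List.IsPrefix.trans ?_ (List.prefix_append _ _)
    exact List.prefix_iff_eq_take.mpr (by simp [List.take_replicate]; omega)

end Stmt19Aux

open Stmt19Aux

/-- For `t, s` both odd, the word `w = φ^m(0^{(t+1)/2})·0^{(t-s)/2}` is a
prefix of `φ^{m+1}(a)·w` for every letter `a`. -/
theorem stmt19 (m t s : ℕ) (hm : 1 ≤ m) (hs : 1 ≤ s) (hts : s ≤ t)
    (ht : Odd t) (hso : Odd s) (a : ℕ) (ha : a < m) :
    ((applyMorph (phi m t s))^[m] (List.replicate ((t + 1) / 2) 0)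
        ++ List.replicate ((t - s) / 2) 0) <+:
      ((applyMorph (phi m t s))^[m + 1] [a]
        ++ ((applyMorph (phi m t s))^[m] (List.replicate ((t + 1) / 2) 0)
            ++ List.replicate ((t - s) / 2) 0)) := by
  set F := applyMorph (phi m t s) with hF
  set P := F^[m] [0] with hPdef
  set c := (t + 1) / 2 with hc
  set d := (t - s) / 2 with hd
  set w := F^[m] (List.replicate c 0) ++ List.replicate d 0 with hw
  have ht1 : 1 ≤ t := le_trans hs hts
  have hdt : d ≤ t := by omega
  -- w is a prefix of P ++ w (in fact X ++ 0^d <+: P ++ X ++ 0^d for any X = F^[m](0^n))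
  have gen : ∀ n : ℕ, (F^[m] (List.replicate n 0) ++ List.replicate d 0) <+:
      P ++ (F^[m] (List.replicate n 0) ++ List.replicate d 0) := by
    intro n
    induction n with
    | zero =>
        rw [List.replicate_zero, Fk_nil, List.nil_append]
        exact zeros_prefix m t s hm hs ht1 d hdt
    | succ k ih =>
        rw [show List.replicate (k+1) 0 = [0] ++ List.replicate k 0 from rfl,
          Fk_append, ← hPdef, ← hF, List.append_assoc]
        exact (List.prefix_append_right_inj P).mpr ih
  have key : w <+: P ++ w := gen c
  have keyk : ∀ k : ℕ, w <+: (List.replicate k P).flatten ++ w := by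
    intro k
    induction k with
    | zero => simp
    | succ n ih =>
        rw [List.replicate_succ, List.flatten_cons, List.append_assoc]
        exact key.trans ((List.prefix_append_right_inj P).mpr ih)
  have hlenP : 1 ≤ P.length := by
    have h := Fk_ne_nil m t s m [0] hs (by simp)
    rw [← hF, ← hPdef] at h
    exact List.length_pos_iff.mpr h
  have hlenw : w.length = c * P.length + d := by
    rw [hw, List.length_append, List.length_replicate, Fk_replicate, ← hF, ← hPdef]
    simp [List.length_flatten, List.map_replicate]
  rcases eq_or_ne a (m - 1) with rfl | hne
  · -- a = m - 1 : F^[m+1][a] = P^s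
    have him : F^[m+1] [m-1] = F^[m] (List.replicate s 0) := by
      rw [hF, Function.iterate_succ_apply]
      congr 1
      show [m-1].flatMap (phi m t s) = _
      simp [phi]
    rw [him, Fk_replicate, ← hF, ← hPdef]
    exact keyk s
  · -- a < m - 1 : F^[m+1][a] = P^t ++ F^[m][a+1]; and |w| ≤ t * |P|
    have him : F^[m+1] [a] = F^[m] (List.replicate t 0) ++ F^[m] [a+1] := by
      rw [hF, Function.iterate_succ_apply, ← Fk_append]
      congr 1
      show [a].flatMap (phi m t s) = _
      simp [phi, hne]
    have hwlen : w.length ≤ (F^[m] (List.replicate t 0)).length := by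
      rw [hlenw, Fk_replicate, ← hF, ← hPdef]
      simp only [List.length_flatten, List.map_replicate, List.sum_replicate,
        smul_eq_mul]
      have h1 : c + (t-1)/2 = t := by rcases ht with ⟨j, hj⟩; omega
      have h2 : d ≤ (t-1)/2 := by omega
      calc c * P.length + d ≤ c * P.length + (t-1)/2 * P.length := by nlinarith
        _ = t * P.length := by rw [← add_mul, h1]
    have h1 : w <+: F^[m] (List.replicate t 0) ++ w := by
      rw [Fk_replicate, ← hF, ← hPdef]; exact keyk t
    have hwp : w <+: F^[m] (List.replicate t 0) :=
      List.prefix_of_prefix_length_le h1 (List.prefix_append _ _) hwlen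
    rw [him, List.append_assoc]
    exact hwp.trans (List.prefix_append _ _)
end
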